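/- arXiv:1706.04396 — 4 statements merged into one kernel-verified Lean document; each statement's English description precedes it below -/
import Mathlib

section
/- Every complete separable metric space M that contains an isometric copy of every countable complete metric space contains an isometric copy of every separable metric space. -/
open Set Topology TopologicalSpace MeasureTheory

/-- The Effros Borel structure on the collection of closed subsets of `X`. -/
def effrosSigma (X : Type*) [TopologicalSpace X] :
    MeasurableSpace {A : Set X // IsClosed A} :=
  MeasurableSpace.generateFrom
    {𝓤 : Set {A : Set X // IsClosed A} |
      ∃ U : Set X, IsOpen U ∧ 𝓤 = {A : {A : Set X // IsClosed A} | ((A : Set X) ∩ U).Nonempty}}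

/-- `𝓐` is the result of the Souslin operation applied to `m`-measurable sets. -/
def IsSouslinIn {α : Type*} (m : MeasurableSpace α) (𝓐 : Set α) : Prop :=
  ∃ f : List ℕ → Set α, (∀ s, MeasurableSet[m] (f s)) ∧
    𝓐 = ⋃ σ : ℕ → ℕ, ⋂ n : ℕ, f (List.ofFn fun i : Fin n => σ i)

/-- dim X ≤ 0 : `X` has a base consisting of clopen sets (or is empty). -/
def ZeroDimensional (X : Type*) [TopologicalSpace X] : Prop :=
  ∃ B : Set (Set X), (∀ s ∈ B, IsClopen s) ∧ IsTopologicalBasis B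

/-- Every point of `S` is isolated in the subspace `S`. -/
def RelativelyDiscrete {E : Type*} [TopologicalSpace E] (S : Set E) : Prop :=
  ∀ x ∈ S, ∃ U : Set E, IsOpen U ∧ U ∩ S = {x}

/-- countable union of zero-dimensional subspaces -/
def CountableDimensional (X : Type*) [TopologicalSpace X] : Prop :=
  ∃ C : ℕ → Set X, (⋃ n, C n) = univ ∧ ∀ n, ZeroDimensional (C n)

/-- F₀(X): nonempty zero-dimensional closed sets -/
def zeroDimClosedSets (X : Type*) [TopologicalSpace X] :
    Set {A : Set X // IsClosed A} :=
  {A | (A : Set X).Nonempty ∧ ZeroDimensional (A : Set X)}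

/-- The Vietoris topology on the collection of closed subsets of `X`. -/
def vietoris (X : Type*) [TopologicalSpace X] :
    TopologicalSpace {A : Set X // IsClosed A} :=
  TopologicalSpace.generateFrom
    ({𝓤 | ∃ U : Set X, IsOpen U ∧ 𝓤 = {A : {A : Set X // IsClosed A} | (A : Set X) ⊆ U}} ∪
     {𝓤 | ∃ U : Set X, IsOpen U ∧
        𝓤 = {A : {A : Set X // IsClosed A} | ((A : Set X) ∩ U).Nonempty}})

/-- The Wijsman topology on nonempty closed subsets of a metric space. -/
noncomputable def wijsman (E : Type*) [MetricSpace E] :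
    TopologicalSpace {A : Set E // IsClosed A ∧ A.Nonempty} :=
  ⨅ z : E, TopologicalSpace.induced (fun A => Metric.infDist z (A : Set E)) inferInstance

open Filter
noncomputable section
namespace Univ8


/-- geometric sequence -/
def eps (k : ℕ) : ℝ := (1/2 : ℝ)^k

lemma eps_pos (k : ℕ) : 0 < eps k := pow_pos (by norm_num) k

lemma eps_antitone : ∀ {k l : ℕ}, k ≤ l → eps l ≤ eps k := by
  intro k l h
  exact pow_le_pow_of_le_one (by norm_num) (by norm_num) h

lemma eps_strictAnti : ∀ {k l : ℕ}, k < l → eps l < eps k := by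
  intro k l h
  exact pow_lt_pow_right_of_lt_one₀ (by norm_num) (by norm_num) h

lemma lt_of_eps_lt {a k : ℕ} (h : eps a < eps k) : k < a := by
  by_contra hc
  exact absurd (eps_antitone (Nat.le_of_not_lt hc)) (not_le.mpr h)

lemma eps_succ (k : ℕ) : eps (k+1) = eps k * (1/2) := by
  simp [eps, pow_succ]


lemma eps_add (a n : ℕ) : eps (a + n) = eps a * (1/2)^n := pow_add _ _ _

lemma exists_eps_lt {γ : ℝ} (hγ : 0 < γ) : ∃ k, eps k < γ := by
  obtain ⟨k, hk⟩ := exists_pow_lt_of_lt_one hγ (show (1/2:ℝ) < 1 by norm_num)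
  exact ⟨k, hk⟩

/-- length of the longest common prefix -/
def comlen {A : Type*} [DecidableEq A] : List A → List A → ℕ
  | a::s, b::t => if a = b then comlen s t + 1 else 0
  | _, _ => 0

variable {A : Type*} [DecidableEq A]

lemma comlen_nil_left (t : List A) : comlen ([] : List A) t = 0 := by cases t <;> rfl

lemma comlen_nil_right (s : List A) : comlen s ([] : List A) = 0 := by cases s <;> rfl

lemma comlen_comm (s t : List A) : comlen s t = comlen t s := by
  induction s generalizing t with
  | nil => rw [comlen_nil_left, comlen_nil_right]
  | cons a s ih =>
    cases t with
    | nil => rw [comlen_nil_left, comlen_nil_right]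
    | cons b t =>
      simp only [comlen]
      rcases eq_or_ne a b with rfl | hab
      · simp [ih]
      · rw [if_neg hab, if_neg (Ne.symm hab)]

lemma comlen_le_left (s t : List A) : comlen s t ≤ s.length := by
  induction s generalizing t with
  | nil => simp [comlen_nil_left]
  | cons a s ih =>
    cases t with
    | nil => simp [comlen_nil_right]
    | cons b t =>
      simp only [comlen, List.length_cons]
      split
      · exact Nat.succ_le_succ (ih t)
      · omega

lemma comlen_le_right (s t : List A) : comlen s t ≤ t.length := by
  rw [comlen_comm]; exact comlen_le_left t s

lemma comlen_min (s t u : List A) : min (comlen s t) (comlen t u) ≤ comlen s u := by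
  induction s generalizing t u with
  | nil => simp [comlen_nil_left]
  | cons a s ih =>
    cases t with
    | nil => simp [comlen_nil_right, comlen_nil_left]
    | cons b t =>
      cases u with
      | nil => simp [comlen_nil_right]
      | cons c u =>
        simp only [comlen]
        rcases eq_or_ne a b with rfl | hab
        · rcases eq_or_ne a c with rfl | hbc
          · simp only [eq_self_iff_true, if_true]
            have h2 := ih t u
            rcases le_total (comlen s t) (comlen t u) with hle | hle
            · rw [min_eq_left (by omega)]
              rw [min_eq_left hle] at h2
              omega
            · rw [min_eq_right (by omega)]
              rw [min_eq_right hle] at h2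
              omega
          · simp [if_pos rfl, if_neg hbc]
        · simp [if_neg hab]

lemma comlen_of_prefix {s t : List A} (h : s <+: t) : comlen s t = s.length := by
  obtain ⟨r, rfl⟩ := h
  induction s with
  | nil => simp [comlen_nil_left]
  | cons a s ih => simpa [comlen] using ih

lemma take_eq_of_comlen_le {s t : List A} {k : ℕ} (h : k ≤ comlen s t) :
    s.take k = t.take k := by
  induction s generalizing t k with
  | nil => rw [comlen_nil_left] at h; interval_cases k; simp
  | cons a s ih =>
    cases t with
    | nil => rw [comlen_nil_right] at h; interval_cases k; simp
    | cons b t =>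
      simp only [comlen] at h
      cases k with
      | zero => simp
      | succ k =>
        rcases eq_or_ne a b with rfl | hab
        · rw [if_pos rfl] at h
          simp [List.take_succ_cons, ih (Nat.succ_le_succ_iff.mp h)]
        · rw [if_neg hab] at h; omega


variable {M : Type} [MetricSpace M]


def Rel (dD : ℕ → ℕ → ℝ) (b a : (ℕ → M) × ℕ) : Prop :=
  b.2 = a.2 + 1 ∧ ∀ p q, dist (a.1 p) (b.1 q) = dD p q + eps a.2

lemma chain_to_embed [CompleteSpace M] {dD : ℕ → ℕ → ℝ}
    (hself : ∀ i, dD i i = 0)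
    (x : ℕ → (ℕ → M) × ℕ) (hx : ∀ n, Rel dD (x (n+1)) (x n)) :
    ∃ c : ℕ → M, ∀ p q, dist (c p) (c q) = dD p q := by
  have hlev : ∀ n, (x n).2 = (x 0).2 + n := by
    intro n; induction n with
    | zero => rfl
    | succ n ih => rw [(hx n).1, ih]; omega
  have hcons : ∀ i n, dist ((x n).1 i) ((x (n+1)).1 i) = eps ((x 0).2) * (1/2)^n := by
    intro i n
    have h := (hx n).2 i i
    rw [hself, zero_add, hlev n, eps_add] at h
    exact h
  have key : ∀ i, ∃ ci : M, Filter.Tendsto (fun n => (x n).1 i) Filter.atTop (nhds ci) := by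
    intro i
    apply cauchySeq_tendsto_of_complete
    exact cauchySeq_of_le_geometric (1/2:ℝ) (eps ((x 0).2)) (by norm_num)
      (fun n => le_of_eq (hcons i n))
  choose c hc using key
  refine ⟨c, fun p q => ?_⟩
  have t2 : Filter.Tendsto (fun n => (x (n+1)).1 q) Filter.atTop (nhds (c q)) :=
    (hc q).comp (Filter.tendsto_add_atTop_nat 1)
  have tdist : Filter.Tendsto (fun n => dist ((x n).1 p) ((x (n+1)).1 q))
      Filter.atTop (nhds (dist (c p) (c q))) := (hc p).dist t2
  have teq : (fun n => dist ((x n).1 p) ((x (n+1)).1 q))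
      = fun n => dD p q + eps ((x 0).2) * (1/2)^n := by
    funext n
    have h := (hx n).2 p q
    rw [h, hlev n, eps_add]
  have tlim : Filter.Tendsto (fun n : ℕ => dD p q + eps ((x 0).2) * (1/2)^n)
      Filter.atTop (nhds (dD p q + 0)) := by
    apply Filter.Tendsto.const_add
    have h0 : Filter.Tendsto (fun n : ℕ => (1/2:ℝ)^n) Filter.atTop (nhds 0) :=
      tendsto_pow_atTop_nhds_zero_of_lt_one (by norm_num) (by norm_num)
    simpa using h0.const_mul (eps ((x 0).2))
  rw [teq] at tdist
  have := tendsto_nhds_unique tdist tlim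
  rw [this, add_zero]

abbrev Bty := List (List ℕ)

def colget (b : Bty) (i m : ℕ) : ℕ := (b.getD i []).getD m 0

def Scond (dD : ℕ → ℕ → ℝ) (Q : ℕ → M) (s : List Bty) : Prop :=
  ∃ x : ℕ → ℕ → M,
    (∀ i, i + 1 < s.length → ∀ p q, dist (x i p) (x (i+1) q) = dD p q + eps i) ∧
    (∀ k, k < s.length → ∀ i ≤ k, ∀ m ≤ k,
       dist (Q (colget (s.getD k []) i m)) (x i m) ≤ eps k)

lemma getD_eq_of_prefix {t s : List Bty} (h : t <+: s) {k : ℕ} (hk : k < t.length) :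
    s.getD k [] = t.getD k [] := by
  obtain ⟨r, rfl⟩ := h
  rw [List.getD_eq_getElem _ _ hk, List.getD_eq_getElem _ _ (by simp; omega)]
  exact List.getElem_append_left hk

lemma Scond_prefix {dD : ℕ → ℕ → ℝ} {Q : ℕ → M} {s t : List Bty}
    (hs : Scond dD Q s) (h : t <+: s) : Scond dD Q t := by
  obtain ⟨x, h1, h2⟩ := hs
  have hle := h.length_le
  refine ⟨x, fun i hi p q => h1 i (by omega) p q, fun k hk i hi m hm => ?_⟩
  rw [← getD_eq_of_prefix h hk]
  exact h2 k (by omega) i hi m hm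

lemma Scond_nil {dD : ℕ → ℕ → ℝ} {Q : ℕ → M} [Nonempty M] :
    Scond dD Q ([] : List Bty) :=
  ⟨fun _ _ => Classical.arbitrary M, by simp, by simp⟩


lemma branch_to_chain [CompleteSpace M] {dD : ℕ → ℕ → ℝ} {Q : ℕ → M}
    (τ : ℕ → List Bty)
    (hlen : ∀ k, (τ k).length = k)
    (hcons : ∀ k l, k ≤ l → τ k = (τ l).take k)
    (hS : ∀ k, Scond dD Q (τ k)) :
    ∃ x : ℕ → (ℕ → M) × ℕ, ∀ n, Rel dD (x (n+1)) (x n) := by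
  choose xw h1 h2 using hS
  set col : ℕ → Bty := fun k => (τ (k+1)).getD k [] with hcol
  have hcoln : ∀ k n, k < n → (τ n).getD k [] = col k := by
    intro k n hkn
    have hpre : τ (k+1) <+: τ n := by
      rw [hcons (k+1) n hkn]
      exact List.take_prefix _ _
    exact getD_eq_of_prefix hpre (by rw [hlen]; omega)
  set q : ℕ → ℕ → ℕ → M := fun i m k => Q (colget (col k) i m) with hq
  have happ : ∀ i m k n, i ≤ k → m ≤ k → k < n → dist (q i m k) (xw n i m) ≤ eps k := by
    intro i m k n hik hmk hkn
    have h := h2 n k (by rw [hlen]; omega) i hik m hmk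
    rwa [hcoln k n hkn] at h
  have hqq : ∀ i m k k', i ≤ k → m ≤ k → k ≤ k' →
      dist (q i m k) (q i m k') ≤ eps k + eps k' := by
    intro i m k k' hik hmk hkk
    have ha := happ i m k (k'+1) hik hmk (by omega)
    have hb := happ i m k' (k'+1) (le_trans hik hkk) (le_trans hmk hkk) (by omega)
    calc dist (q i m k) (q i m k')
        ≤ dist (q i m k) (xw (k'+1) i m) + dist (xw (k'+1) i m) (q i m k') :=
          dist_triangle _ _ _
      _ ≤ eps k + eps k' := add_le_add ha (by rw [dist_comm]; exact hb)
  have key : ∀ i m, ∃ z, Tendsto (fun j => q i m (max i m + j)) atTop (nhds z) := by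
    intro i m
    apply cauchySeq_tendsto_of_complete
    apply cauchySeq_of_le_geometric (1/2:ℝ) (2 * eps (max i m)) (by norm_num)
    intro j
    have hle := hqq i m (max i m + j) (max i m + j + 1)
      (le_trans (le_max_left i m) (by omega)) (le_trans (le_max_right i m) (by omega)) (by omega)
    have e1 : eps (max i m + j) = eps (max i m) * (1/2)^j := eps_add _ _
    have e2 : eps (max i m + j + 1) = eps (max i m) * ((1/2)^j * (1/2)) := by
      rw [show max i m + j + 1 = max i m + (j+1) by omega, eps_add, pow_succ]
    have hp : (0:ℝ) < (1/2:ℝ)^j := by positivity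
    have hm := eps_pos (max i m)
    have : dist (q i m (max i m + j)) (q i m (max i m + (j + 1))) ≤
        2 * eps (max i m) * (1/2)^j := by
      rw [show max i m + (j+1) = max i m + j + 1 by omega]
      nlinarith [hle]
    exact this
  choose z hz using key
  have hqz : ∀ i m k, max i m ≤ k → dist (q i m k) (z i m) ≤ 2 * eps k := by
    intro i m k hk
    have t : Tendsto (fun j => dist (q i m k) (q i m (max i m + j))) atTop
        (nhds (dist (q i m k) (z i m))) := tendsto_const_nhds.dist (hz i m)
    apply le_of_tendsto t
    refine Filter.eventually_atTop.mpr ⟨k, fun j hj => ?_⟩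
    have hle := hqq i m k (max i m + j)
      (le_trans (le_max_left i m) hk) (le_trans (le_max_right i m) hk) (by omega)
    have : eps (max i m + j) ≤ eps k := eps_antitone (by omega)
    linarith
  have hxz : ∀ i m, Tendsto (fun n => xw n i m) atTop (nhds (z i m)) := by
    intro i m
    rw [Metric.tendsto_atTop]
    intro γ hγ
    obtain ⟨k0, hk0⟩ := exists_eps_lt (show 0 < γ/3 by linarith)
    set k := max k0 (max i m) with hkdef
    refine ⟨k+1, fun n hn => ?_⟩
    have ha := happ i m k n (le_trans (le_max_left i m) (le_max_right k0 _))
      (le_trans (le_max_right i m) (le_max_right k0 _)) (by omega)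
    have hb := hqz i m k (le_max_right _ _)
    have hc : eps k ≤ eps k0 := eps_antitone (le_max_left _ _)
    calc dist (xw n i m) (z i m)
        ≤ dist (xw n i m) (q i m k) + dist (q i m k) (z i m) := dist_triangle _ _ _
      _ ≤ eps k + 2 * eps k := add_le_add (by rw [dist_comm]; exact ha) hb
      _ < γ := by linarith
  refine ⟨fun i => (fun m => z i m, i), fun i => ⟨rfl, fun p p' => ?_⟩⟩
  have t : Tendsto (fun n => dist (xw n i p) (xw n (i+1) p')) atTop
      (nhds (dist (z i p) (z (i+1) p'))) := (hxz i p).dist (hxz (i+1) p')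
  have t' : Tendsto (fun n => dist (xw n i p) (xw n (i+1) p')) atTop
      (nhds (dD p p' + eps i)) := by
    apply Tendsto.congr' _ tendsto_const_nhds
    filter_upwards [Filter.eventually_ge_atTop (i+2)] with n hn
    exact (h1 n i (by rw [hlen]; omega) p p').symm
  exact tendsto_nhds_unique t t'



def cp {A : Type*} [DecidableEq A] (s : List A) (i : ℕ) (t : List A) (j : ℕ) : ℝ :=
  if s = t then (if i = j then 0 else eps s.length) else eps (comlen s t)

variable {A : Type*} [DecidableEq A]

lemma cp_nonneg (s : List A) (i : ℕ) (t : List A) (j : ℕ) : 0 ≤ cp s i t j := by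
  unfold cp; split_ifs <;> first | rfl | exact (eps_pos _).le

lemma cp_self (s : List A) (i : ℕ) : cp s i s i = 0 := by simp [cp]

lemma cp_comm (s : List A) (i : ℕ) (t : List A) (j : ℕ) : cp s i t j = cp t j s i := by
  unfold cp
  rcases eq_or_ne s t with rfl | hst
  · rcases eq_or_ne i j with rfl | hij
    · simp
    · rw [if_pos rfl, if_pos rfl, if_neg hij, if_neg (Ne.symm hij)]
  · rw [if_neg hst, if_neg (Ne.symm hst), comlen_comm]

lemma cp_pos_of_ne {s t : List A} {i j : ℕ} (h : ¬ (s = t ∧ i = j)) : 0 < cp s i t j := by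
  unfold cp
  rcases eq_or_ne s t with rfl | hst
  · rw [if_pos rfl, if_neg (fun hij => h ⟨rfl, hij⟩)]
    exact eps_pos _
  · rw [if_neg hst]; exact eps_pos _

lemma eps_comlen_le {s t : List A} : eps s.length ≤ eps (comlen s t) :=
  eps_antitone (comlen_le_left s t)

lemma cp_triangle (s : List A) (i : ℕ) (t : List A) (j : ℕ) (u : List A) (k : ℕ) :
    cp s i u k ≤ cp s i t j + cp t j u k := by
  have n1 := cp_nonneg s i t j
  have n2 := cp_nonneg t j u k
  rcases eq_or_ne s u with rfl | hsu
  · rcases eq_or_ne i k with rfl | hik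
    · rw [cp_self]; linarith
    · -- LHS = eps |s|
      have hL : cp s i s k = eps s.length := by rw [cp]; rw [if_pos rfl, if_neg hik]
      rw [hL]
      rcases eq_or_ne s t with rfl | hst
      · rcases eq_or_ne i j with rfl | hij
        · rw [cp_self]
          have e : cp s i s k = eps s.length := by rw [cp, if_pos rfl, if_neg hik]
          linarith [e.ge]
        · have e : cp s i s j = eps s.length := by rw [cp, if_pos rfl, if_neg hij]
          linarith [e.ge]
      · have : cp s i t j = eps (comlen s t) := by rw [cp, if_neg hst]
        have h2 : eps s.length ≤ eps (comlen s t) := eps_comlen_le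
        linarith [this.ge]
  · have hL : cp s i u k = eps (comlen s u) := by rw [cp, if_neg hsu]
    rw [hL]
    rcases eq_or_ne s t with rfl | hst
    · have htu : s ≠ u := hsu
      have : cp s j u k = eps (comlen s u) := by rw [cp, if_neg htu]
      linarith [this.ge]
    · rcases eq_or_ne t u with rfl | htu
      · have : cp s i t j = eps (comlen s t) := by rw [cp, if_neg hst]
        linarith [this.ge]
      · have e1 : cp s i t j = eps (comlen s t) := by rw [cp, if_neg hst]
        have e2 : cp t j u k = eps (comlen t u) := by rw [cp, if_neg htu]
        rw [e1, e2]
        have hmin := comlen_min s t u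
        rcases le_total (comlen s t) (comlen t u) with hle | hle
        · have : comlen s t ≤ comlen s u := by
            rw [min_eq_left hle] at hmin; exact hmin
          have := eps_antitone this
          linarith [ (eps_pos (comlen t u)).le ]
        · have : comlen t u ≤ comlen s u := by
            rw [min_eq_right hle] at hmin; exact hmin
          have := eps_antitone this
          linarith [ (eps_pos (comlen s t)).le ]


lemma eps_lt_imp {a k : ℕ} (h : eps a < eps k) : k < a := by
  by_contra hc
  exact absurd (eps_antitone (Nat.le_of_not_lt hc)) (not_le.mpr h)

section Main

variable (dD : ℕ → ℕ → ℝ) (Q : ℕ → M)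

def SS : Type := {s : List Bty // Scond dD Q s}

variable {dD} {Q}

variable (hself : ∀ i, dD i i = 0) (hsymm : ∀ i j, dD i j = dD j i)
  (htri : ∀ i j, ∀ l, dD i l ≤ dD i j + dD j l)

include hself hsymm htri in
lemma dD_nonneg : ∀ i j, 0 ≤ dD i j := by
  intro i j
  have := htri i j i
  rw [hself, hsymm j i] at this
  linarith

def ytDist (a b : SS dD Q × ℕ) : ℝ := dD a.2 b.2 + cp a.1.val a.2 b.1.val b.2

include hself hsymm htri in
lemma ytDist_self (a : SS dD Q × ℕ) : ytDist a a = 0 := by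
  unfold ytDist; rw [hself, cp_self, add_zero]

include hself hsymm htri in
lemma ytDist_comm (a b : SS dD Q × ℕ) : ytDist a b = ytDist b a := by
  unfold ytDist; rw [hsymm, cp_comm]

include hself hsymm htri in
lemma ytDist_triangle (a b c : SS dD Q × ℕ) : ytDist a c ≤ ytDist a b + ytDist b c := by
  unfold ytDist
  have h1 := htri a.2 b.2 c.2
  have h2 := cp_triangle a.1.val a.2 b.1.val b.2 c.1.val c.2
  linarith

include hself hsymm htri in
lemma ytDist_eq_zero {a b : SS dD Q × ℕ} (hd : ytDist a b = 0) : a = b := by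
  unfold ytDist at hd
  have hn := dD_nonneg hself hsymm htri a.2 b.2
  by_contra hne
  have : ¬ (a.1.val = b.1.val ∧ a.2 = b.2) := by
    rintro ⟨h1, h2⟩
    exact hne (Prod.ext (Subtype.ext h1) h2)
  have := cp_pos_of_ne this
  linarith

def ytMetric : MetricSpace (SS dD Q × ℕ) where
  dist := ytDist
  dist_self := ytDist_self hself hsymm htri
  dist_comm := ytDist_comm hself hsymm htri
  dist_triangle := ytDist_triangle hself hsymm htri
  eq_of_dist_eq_zero := ytDist_eq_zero hself hsymm htri


include hself hsymm htri in
lemma yt_complete [CompleteSpace M]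
    (hNo : ¬ ∃ x : ℕ → (ℕ → M) × ℕ, ∀ n, Rel dD (x (n+1)) (x n)) :
    @CompleteSpace (SS dD Q × ℕ) (ytMetric hself hsymm htri).toUniformSpace := by
  letI := ytMetric (dD := dD) (Q := Q) hself hsymm htri
  have hdist : ∀ a b : SS dD Q × ℕ, dist a b = ytDist a b := fun a b => rfl
  have hnn := dD_nonneg hself hsymm htri
  apply Metric.complete_of_cauchySeq_tendsto
  intro u hu
  rw [Metric.cauchySeq_iff] at hu
  by_cases hA : ∃ N, ∀ n, N ≤ n → (u n).1 = (u N).1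
  · obtain ⟨N, hN⟩ := hA
    obtain ⟨N', hN'⟩ := hu (eps ((u N).1.val.length)) (eps_pos _)
    set P := max N N' with hP
    have hfix : ∀ n, P ≤ n → u n = u P := by
      intro n hn
      have h1 : (u n).1 = (u P).1 := by
        rw [hN n (le_trans (le_max_left _ _) hn), hN P (le_max_left _ _)]
      have h2 : (u n).2 = (u P).2 := by
        by_contra hne
        have hd := hN' n (le_trans (le_max_right _ _) hn) P (le_max_right _ _)
        rw [hdist, ytDist] at hd
        have hcp : cp (u n).1.val (u n).2 (u P).1.val (u P).2
            = eps ((u n).1.val.length) := by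
          rw [cp, if_pos (by rw [h1]), if_neg hne]
        rw [hcp] at hd
        have h3 : (u n).1 = (u N).1 := hN n (le_trans (le_max_left _ _) hn)
        rw [h3] at hd
        have := hnn (u n).2 (u P).2
        linarith
      exact Prod.ext h1 h2
    refine ⟨u P, ?_⟩
    apply Tendsto.congr' _ tendsto_const_nhds
    filter_upwards [Filter.eventually_ge_atTop P] with n hn
    exact (hfix n hn).symm
  · exfalso
    push_neg at hA
    choose Nf hNf using fun k => hu (eps k) (eps_pos k)
    have hcl : ∀ k m n, Nf k ≤ m → Nf k ≤ n → (u m).1 ≠ (u n).1 →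
        k < comlen (u m).1.val (u n).1.val := by
      intro k m n hm hn hne
      have hd := hNf k m hm n hn
      rw [hdist, ytDist] at hd
      have hcp : cp (u m).1.val (u m).2 (u n).1.val (u n).2
          = eps (comlen (u m).1.val (u n).1.val) := by
        rw [cp, if_neg (fun he => hne (Subtype.ext he))]
      rw [hcp] at hd
      have := hnn (u m).2 (u n).2
      exact eps_lt_imp (by linarith)
    have hlen : ∀ k, k ≤ (u (Nf k)).1.val.length := by
      intro k
      obtain ⟨n, hn, hne⟩ := hA (Nf k)
      have hc := hcl k (Nf k) n le_rfl hn (fun he => hne (by rw [he]))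
      have := comlen_le_left (u (Nf k)).1.val (u n).1.val
      omega
    have hagree : ∀ k l, k ≤ l →
        (u (Nf k)).1.val.take k = (u (Nf l)).1.val.take k := by
      intro k l hkl
      set P := max (Nf k) (Nf l) with hPd
      have e1 : (u (Nf k)).1.val.take k = (u P).1.val.take k := by
        rcases eq_or_ne (u (Nf k)).1 (u P).1 with he | hne
        · rw [he]
        · exact take_eq_of_comlen_le
            (le_of_lt (hcl k (Nf k) P le_rfl (le_max_left _ _) hne))
      have e2 : (u (Nf l)).1.val.take l = (u P).1.val.take l := by
        rcases eq_or_ne (u (Nf l)).1 (u P).1 with he | hne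
        · rw [he]
        · exact take_eq_of_comlen_le
            (le_of_lt (hcl l (Nf l) P le_rfl (le_max_right _ _) hne))
      calc (u (Nf k)).1.val.take k = (u P).1.val.take k := e1
        _ = ((u P).1.val.take l).take k := by rw [List.take_take, min_eq_left hkl]
        _ = ((u (Nf l)).1.val.take l).take k := by rw [e2]
        _ = (u (Nf l)).1.val.take k := by rw [List.take_take, min_eq_left hkl]
    set τ : ℕ → List Bty := fun k => (u (Nf k)).1.val.take k with hτ
    have hlen2 : ∀ k, (τ k).length = k := by
      intro k
      rw [hτ]
      simp only [List.length_take]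
      exact min_eq_left (hlen k)
    have hcons : ∀ k l, k ≤ l → τ k = (τ l).take k := by
      intro k l hkl
      rw [hτ]
      simp only
      rw [List.take_take, min_eq_left hkl]
      exact hagree k l hkl
    have hS : ∀ k, Scond dD Q (τ k) :=
      fun k => Scond_prefix (u (Nf k)).1.2 (List.take_prefix _ _)
    obtain ⟨x, hx⟩ := branch_to_chain τ hlen2 hcons hS
    exact hNo ⟨x, hx⟩

lemma countable_SS : Countable (SS dD Q) :=
  show Countable {s : List Bty // Scond dD Q s} from inferInstance

def Srel (a b : SS dD Q) : Prop := b.val <+: a.val ∧ a.val ≠ b.val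

lemma srel_wf [CompleteSpace M]
    (hNo : ¬ ∃ x : ℕ → (ℕ → M) × ℕ, ∀ n, Rel dD (x (n+1)) (x n)) :
    WellFounded (Srel (dD := dD) (Q := Q)) := by
  by_contra hwf
  have hex : ∃ a, ¬ Acc (Srel (dD := dD) (Q := Q)) a := by
    by_contra hc
    push_neg at hc
    exact hwf ⟨hc⟩
  obtain ⟨a, ha⟩ := hex
  have step : ∀ b : SS dD Q, ¬ Acc Srel b → ∃ c, Srel c b ∧ ¬ Acc Srel c := by
    intro b hb
    by_contra hc
    push_neg at hc
    exact hb (Acc.intro b fun c hcb => hc c hcb)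
  let g : ℕ → {b : SS dD Q // ¬ Acc Srel b} :=
    fun n => Nat.rec ⟨a, ha⟩
      (fun _ p => ⟨(step p.1 p.2).choose, ((step p.1 p.2).choose_spec).2⟩) n
  have hg : ∀ n, Srel (g (n+1)).1 (g n).1 :=
    fun n => ((step (g n).1 (g n).2).choose_spec).1
  have hlt : ∀ n, (g n).1.val.length < (g (n+1)).1.val.length := by
    intro n
    have hh := hg n
    rcases lt_or_eq_of_le hh.1.length_le with hlt | heq
    · exact hlt
    · exact absurd (hh.1.eq_of_length heq) (fun he => hh.2 he.symm)
  have hmono : ∀ m n, m ≤ n → (g m).1.val <+: (g n).1.val := by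
    intro m n hmn
    induction n with
    | zero => rw [Nat.le_zero.mp hmn]
    | succ n ih =>
      rcases Nat.lt_or_ge m (n+1) with hlt2 | hge
      · exact (ih (by omega)).trans (hg n).1
      · rw [show m = n + 1 by omega]
  have hglen : ∀ n, n ≤ (g n).1.val.length := by
    intro n
    induction n with
    | zero => exact Nat.zero_le _
    | succ n ih => have := hlt n; omega
  set τ : ℕ → List Bty := fun k => (g k).1.val.take k with hτ
  have hlen2 : ∀ k, (τ k).length = k := by
    intro k
    rw [hτ]
    simp only [List.length_take]
    exact min_eq_left (hglen k)
  have hcons : ∀ k l, k ≤ l → τ k = (τ l).take k := by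
    intro k l hkl
    rw [hτ]
    simp only
    rw [List.take_take, min_eq_left hkl]
    have hpre := hmono k l hkl
    have hck : k ≤ comlen (g k).1.val (g l).1.val := by
      rw [comlen_of_prefix hpre]; exact hglen k
    exact take_eq_of_comlen_le hck
  have hS : ∀ k, Scond dD Q (τ k) :=
    fun k => Scond_prefix (g k).1.2 (List.take_prefix _ _)
  obtain ⟨x, hx⟩ := branch_to_chain τ hlen2 hcons hS
  exact hNo ⟨x, hx⟩


lemma no_wf_contradiction
    (hQ : ∀ (v : M) (k : ℕ), ∃ qq, dist (Q qq) v ≤ eps k)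
    (J : SS dD Q × ℕ → M)
    (hJ : ∀ a b, dist (J a) (J b) = ytDist a b)
    (hwf : WellFounded (Srel (dD := dD) (Q := Q))) : False := by
  classical
  choose apx hapx using hQ
  let pre : SS dD Q → ℕ → SS dD Q :=
    fun s i => ⟨s.val.take i, Scond_prefix s.2 (List.take_prefix _ _)⟩
  let av : SS dD Q → ℕ → ℕ → M := fun s i m => J (pre s i, m)
  let colOf : SS dD Q → ℕ → Bty := fun s k =>
    List.ofFn (fun i : Fin (k+1) => List.ofFn (fun m : Fin (k+1) => apx (av s i m) k))
  let psiL : SS dD Q → List Bty :=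
    fun s => List.ofFn (fun k : Fin (s.val.length + 1) => colOf s k)
  have hpsilen : ∀ s : SS dD Q, (psiL s).length = s.val.length + 1 := by
    intro s; simp [psiL]
  have hdistJ : ∀ (s : SS dD Q) (i p q' : ℕ), i + 1 ≤ s.val.length →
      dist (av s i p) (av s (i+1) q') = dD p q' + eps i := by
    intro s i p q' hi
    show dist (J (pre s i, p)) (J (pre s (i+1), q')) = _
    rw [hJ]
    show dD p q' + cp (s.val.take i) p (s.val.take (i+1)) q' = _
    congr 1
    have hne : s.val.take i ≠ s.val.take (i+1) := by
      intro he
      have h2 : (s.val.take i).length = (s.val.take (i+1)).length := by rw [he]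
      rw [List.length_take, List.length_take] at h2
      omega
    have hpre2 : s.val.take i <+: s.val.take (i+1) := by
      have h3 : (s.val.take (i+1)).take i = s.val.take i := by
        rw [List.take_take, min_eq_left (by omega)]
      rw [← h3]
      exact List.take_prefix _ _
    rw [cp, if_neg hne, comlen_of_prefix hpre2, List.length_take,
      min_eq_left (by omega)]
  have hpsiS : ∀ s : SS dD Q, Scond dD Q (psiL s) := by
    intro s
    refine ⟨fun i m => av s i m, ?_, ?_⟩
    · intro i hi p q'
      rw [hpsilen] at hi
      exact hdistJ s i p q' (by omega)
    · intro k hk i hi m hm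
      rw [hpsilen] at hk
      have e1 : (psiL s).getD k [] = colOf s k := by
        rw [List.getD_eq_getElem _ _ (by rw [hpsilen]; omega)]
        simp only [psiL, List.getElem_ofFn]
      rw [e1]
      have hclen : (colOf s k).length = k + 1 := by
        simp only [colOf, List.length_ofFn]
      have e2 : colget (colOf s k) i m = apx (av s i m) k := by
        have hinner : (colOf s k).getD i []
            = List.ofFn (fun mm : Fin (k+1) => apx (av s i mm.val) k) := by
          rw [List.getD_eq_getElem _ _ (by rw [hclen]; omega)]
          simp only [colOf, List.getElem_ofFn]
        unfold colget
        rw [hinner, List.getD_eq_getElem _ _ (by rw [List.length_ofFn]; omega)]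
        simp only [List.getElem_ofFn]
      rw [e2]
      exact hapx (av s i m) k
  have hpretake : ∀ s t : SS dD Q, s.val <+: t.val → ∀ i, i ≤ s.val.length →
      pre s i = pre t i := by
    intro s t hst i hi
    apply Subtype.ext
    show s.val.take i = t.val.take i
    exact take_eq_of_comlen_le (by rw [comlen_of_prefix hst]; omega)
  have hpsipre : ∀ s t : SS dD Q, s.val <+: t.val →
      psiL s = (psiL t).take (s.val.length + 1) := by
    intro s t hst
    have hle : s.val.length ≤ t.val.length := hst.length_le
    apply List.ext_getElem
    · rw [hpsilen, List.length_take, hpsilen]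
      omega
    · intro k h1 h2
      rw [hpsilen] at h1
      have hcol : colOf s k = colOf t k := by
        show List.ofFn _ = List.ofFn _
        congr 1
        funext i
        congr 1
        funext m
        have hav : av s i.val m.val = av t i.val m.val := by
          show J (pre s i.val, m.val) = J (pre t i.val, m.val)
          rw [hpretake s t hst i.val (by omega)]
        exact congrArg (fun v => apx v k) hav
      calc (psiL s)[k] = colOf s k := by simp only [psiL, List.getElem_ofFn]
        _ = colOf t k := hcol
        _ = (psiL t)[k]'(by rw [hpsilen]; omega) := by simp only [psiL, List.getElem_ofFn]
        _ = ((psiL t).take (s.val.length + 1))[k] := List.getElem_take.symm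
  have hpsimono : ∀ s t : SS dD Q, Srel t s →
      Srel (⟨psiL t, hpsiS t⟩ : SS dD Q) ⟨psiL s, hpsiS s⟩ := by
    intro s t hts
    have hlt : s.val.length < t.val.length := by
      rcases lt_or_eq_of_le hts.1.length_le with hl | he
      · exact hl
      · exact absurd (hts.1.eq_of_length he) (fun hh => hts.2 hh.symm)
    constructor
    · show psiL s <+: psiL t
      rw [hpsipre s t hts.1]
      exact List.take_prefix _ _
    · show psiL t ≠ psiL s
      intro he
      have := congrArg List.length he
      rw [hpsilen, hpsilen] at this
      omega
  haveI : IsWellFounded (SS dD Q) (Srel (dD := dD) (Q := Q)) := ⟨hwf⟩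
  have hrank : ∀ s : SS dD Q,
      IsWellFounded.rank (Srel (dD := dD) (Q := Q)) s ≤
      IsWellFounded.rank (Srel (dD := dD) (Q := Q)) ⟨psiL s, hpsiS s⟩ := by
    intro s
    induction s using WellFounded.induction hwf with
    | _ x IH =>
      rw [IsWellFounded.rank_eq]
      apply Ordinal.iSup_le_iff.mpr
      rintro ⟨b, hb⟩
      rw [Order.succ_le_iff]
      calc IsWellFounded.rank Srel b
          ≤ IsWellFounded.rank Srel (⟨psiL b, hpsiS b⟩ : SS dD Q) := IH b hb
        _ < _ := IsWellFounded.rank_lt_of_rel (hpsimono x b hb)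
  haveI : Nonempty M := ⟨Q 0⟩
  let s0 : SS dD Q := ⟨[], Scond_nil⟩
  have hfinal : Srel (⟨psiL s0, hpsiS s0⟩ : SS dD Q) s0 := by
    constructor
    · exact List.nil_prefix
    · intro he
      have := congrArg List.length he
      rw [hpsilen] at this
      simp [s0] at this
  exact absurd (hrank s0) (not_le.mpr (IsWellFounded.rank_lt_of_rel hfinal))


lemma extend_embed [CompleteSpace M] {Y : Type} [MetricSpace Y]
    (y : ℕ → Y) (hy : DenseRange y) (c : ℕ → M)
    (hc : ∀ p q, dist (c p) (c q) = dist (y p) (y q)) :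
    ∃ j : Y → M, Isometry j := by
  have sel : ∀ z : Y, ∀ k : ℕ, ∃ n, dist (y n) z < eps k := by
    intro z k
    obtain ⟨n, hn⟩ := Metric.denseRange_iff.mp hy z (eps k) (eps_pos k)
    exact ⟨n, by rw [dist_comm]; exact hn⟩
  choose φ hφ using sel
  have hconv : ∀ z, Tendsto (fun k => y (φ z k)) atTop (nhds z) := by
    intro z
    rw [Metric.tendsto_atTop]
    intro γ hγ
    obtain ⟨K, hK⟩ := exists_eps_lt hγ
    exact ⟨K, fun k hk => lt_trans (lt_of_lt_of_le (hφ z k) (eps_antitone hk)) hK⟩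
  have hcau : ∀ z, ∃ w, Tendsto (fun k => c (φ z k)) atTop (nhds w) := by
    intro z
    apply cauchySeq_tendsto_of_complete
    rw [Metric.cauchySeq_iff]
    intro γ hγ
    obtain ⟨K, hK⟩ := exists_eps_lt (show 0 < γ/2 by linarith)
    refine ⟨K, fun m hm n hn => ?_⟩
    rw [hc]
    have h1 := hφ z m
    have h2 := hφ z n
    have e1 : eps m ≤ eps K := eps_antitone hm
    have e2 : eps n ≤ eps K := eps_antitone hn
    calc dist (y (φ z m)) (y (φ z n))
        ≤ dist (y (φ z m)) z + dist z (y (φ z n)) := dist_triangle _ _ _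
      _ < γ := by rw [dist_comm z]; linarith
  choose j hj using hcau
  refine ⟨j, Isometry.of_dist_eq fun z w => ?_⟩
  have t1 : Tendsto (fun k => dist (c (φ z k)) (c (φ w k))) atTop
      (nhds (dist (j z) (j w))) := (hj z).dist (hj w)
  have t2 : Tendsto (fun k => dist (c (φ z k)) (c (φ w k))) atTop
      (nhds (dist z w)) := by
    have he : (fun k => dist (c (φ z k)) (c (φ w k)))
        = fun k => dist (y (φ z k)) (y (φ w k)) := by
      funext k; rw [hc]
    rw [he]
    exact (hconv z).dist (hconv w)
  exact tendsto_nhds_unique t1 t2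

end Main

end Univ8


theorem isometrically_universal_of_universal_for_countable_complete
    (M : Type) [MetricSpace M] [CompleteSpace M] [SeparableSpace M]
    (h : ∀ (X : Type) [MetricSpace X] [Countable X] [CompleteSpace X],
      ∃ j : X → M, Isometry j) :
    ∀ (Y : Type) [MetricSpace Y] [SeparableSpace Y], ∃ j : Y → M, Isometry j := by
  intro Y _ _
  rcases isEmpty_or_nonempty Y with hY | hY
  · refine ⟨fun z => (IsEmpty.false z).elim, fun z => ?_⟩
    exact (IsEmpty.false z).elim
  · haveI : Nonempty M := by
      haveI : CompleteSpace PUnit := complete_of_compact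
      obtain ⟨j0, -⟩ := h PUnit
      exact ⟨j0 PUnit.unit⟩
    set y : ℕ → Y := TopologicalSpace.denseSeq Y with hy
    have hyd : DenseRange y := TopologicalSpace.denseRange_denseSeq Y
    set Q : ℕ → M := TopologicalSpace.denseSeq M with hQdef
    have hQd : DenseRange Q := TopologicalSpace.denseRange_denseSeq M
    set dD : ℕ → ℕ → ℝ := fun p q => dist (y p) (y q) with hdD
    have hself : ∀ i, dD i i = 0 := fun i => dist_self _
    have hsymm : ∀ i j, dD i j = dD j i := fun i j => dist_comm _ _
    have htri : ∀ i j l, dD i l ≤ dD i j + dD j l := fun i j l => dist_triangle _ _ _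
    by_cases hchain : ∃ x : ℕ → (ℕ → M) × ℕ, ∀ n, Univ8.Rel dD (x (n+1)) (x n)
    · obtain ⟨x, hx⟩ := hchain
      obtain ⟨c, hc⟩ := Univ8.chain_to_embed hself x hx
      exact Univ8.extend_embed y hyd c hc
    · exfalso
      letI instYT : MetricSpace (Univ8.SS dD Q × ℕ) := Univ8.ytMetric hself hsymm htri
      haveI : CompleteSpace (Univ8.SS dD Q × ℕ) :=
        Univ8.yt_complete hself hsymm htri hchain
      haveI : Countable (Univ8.SS dD Q) := Univ8.countable_SS
      obtain ⟨J, hJ⟩ := h (Univ8.SS dD Q × ℕ)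
      have hJd : ∀ a b, dist (J a) (J b) = Univ8.ytDist a b := fun a b => hJ.dist_eq a b
      have hQ' : ∀ (v : M) (k : ℕ), ∃ qq, dist (Q qq) v ≤ Univ8.eps k := by
        intro v k
        obtain ⟨qq, hqq⟩ := Metric.denseRange_iff.mp hQd v _ (Univ8.eps_pos k)
        exact ⟨qq, by rw [dist_comm]; exact hqq.le⟩
      exact Univ8.no_wf_contradiction hQ' J hJd (Univ8.srel_wf hchain)
end
end

section
/- Every Souslin set in the Effros Borel space (F(ℕ^ℕ), 𝓑_{F(ℕ^ℕ)}) that contains all countable closed subsets of the irrationals ℕ^ℕ contains a non-σ-compact element. -/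
open Set Topology TopologicalSpace MeasureTheory Filter

noncomputable section AuxSouslin

abbrev SSp := Set (List ℕ)
abbrev Code := Finset (Finset (List ℕ) × Finset (List ℕ))

def litSet (pq : Finset (List ℕ) × Finset (List ℕ)) : Set SSp :=
  {S | (↑pq.1 : Set (List ℕ)) ⊆ S ∧ ∀ t ∈ pq.2, t ∉ S}

def evalC (F : Code) : Set SSp := ⋃ pq ∈ F, litSet pq

def codeUniv : Code := {(∅, ∅)}

lemma evalC_codeUniv : evalC codeUniv = univ := by
  ext S; simp [evalC, codeUniv, litSet]

def codeInter (F G : Code) : Code :=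
  (F ×ˢ G).image (fun p => (p.1.1 ∪ p.2.1, p.1.2 ∪ p.2.2))

lemma evalC_codeInter (F G : Code) : evalC (codeInter F G) = evalC F ∩ evalC G := by
  ext S
  simp only [evalC, codeInter, mem_iUnion, Finset.mem_image, Finset.mem_product, mem_inter_iff]
  constructor
  · rintro ⟨pq, ⟨⟨⟨p1, p2⟩, ⟨hp, hq⟩, rfl⟩, hS⟩⟩
    obtain ⟨h1, h2⟩ := hS
    simp only [litSet, Finset.coe_union, union_subset_iff, Finset.mem_union, mem_setOf_eq] at h1 h2
    exact ⟨⟨p1, hp, h1.1, fun t ht => h2 t (Or.inl ht)⟩,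
           ⟨p2, hq, h1.2, fun t ht => h2 t (Or.inr ht)⟩⟩
  · rintro ⟨⟨p1, hp1, hS1⟩, ⟨p2, hp2, hS2⟩⟩
    refine ⟨(p1.1 ∪ p2.1, p1.2 ∪ p2.2), ⟨⟨(p1, p2), ⟨hp1, hp2⟩, rfl⟩, ?_⟩⟩
    simp only [litSet, Finset.coe_union, union_subset_iff, Finset.mem_union, mem_setOf_eq]
    exact ⟨⟨hS1.1, hS2.1⟩, fun t ht => ht.elim (hS1.2 t) (hS2.2 t)⟩

lemma evalC_union (F G : Code) : evalC (F ∪ G) = evalC F ∪ evalC G := by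
  ext S; simp only [evalC, mem_iUnion, Finset.mem_union, mem_union]
  constructor
  · rintro ⟨pq, h | h, hS⟩
    exacts [Or.inl ⟨pq, h, hS⟩, Or.inr ⟨pq, h, hS⟩]
  · rintro (⟨pq, h, hS⟩ | ⟨pq, h, hS⟩)
    exacts [⟨pq, Or.inl h, hS⟩, ⟨pq, Or.inr h, hS⟩]

def negLit (pq : Finset (List ℕ) × Finset (List ℕ)) : Code :=
  pq.1.image (fun t => ((∅ : Finset (List ℕ)), ({t} : Finset (List ℕ)))) ∪
  pq.2.image (fun t => (({t} : Finset (List ℕ)), (∅ : Finset (List ℕ))))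

lemma mem_evalC {F : Code} {S : SSp} : S ∈ evalC F ↔ ∃ pq ∈ F, S ∈ litSet pq := by
  simp [evalC]

lemma evalC_negLit (pq : Finset (List ℕ) × Finset (List ℕ)) :
    evalC (negLit pq) = (litSet pq)ᶜ := by
  ext S
  rw [mem_compl_iff, negLit, evalC_union]
  constructor
  · rintro (h | h) hlit
    · rw [mem_evalC] at h
      obtain ⟨p, hp, hSp⟩ := h
      obtain ⟨t, ht, rfl⟩ := Finset.mem_image.1 hp
      exact hSp.2 t (Finset.mem_singleton_self t) (hlit.1 (by simpa using ht))
    · rw [mem_evalC] at h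
      obtain ⟨p, hp, hSp⟩ := h
      obtain ⟨t, ht, rfl⟩ := Finset.mem_image.1 hp
      exact hlit.2 t ht (hSp.1 (by simp))
  · intro h
    rw [litSet, mem_setOf_eq, not_and_or] at h
    rcases h with h | h
    · rw [not_subset] at h
      obtain ⟨t, ht, hts⟩ := h
      left
      rw [mem_evalC]
      refine ⟨(∅, {t}), Finset.mem_image.2 ⟨t, by simpa using ht, rfl⟩, ?_⟩
      constructor
      · simp
      · intro t' ht'
        rw [Finset.mem_singleton] at ht'
        subst ht'; exact hts
    · push_neg at h
      obtain ⟨t, ht, hts⟩ := h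
      right
      rw [mem_evalC]
      refine ⟨({t}, ∅), Finset.mem_image.2 ⟨t, ht, rfl⟩, ?_⟩
      exact ⟨by simpa using hts, by simp⟩

def foldInterList (l : List Code) : Code := l.foldr codeInter codeUniv

lemma evalC_foldInterList (l : List Code) :
    evalC (foldInterList l) = ⋂ q ∈ l, evalC q := by
  induction l with
  | nil => simp [foldInterList, evalC_codeUniv]
  | cons a l ih =>
    simp only [foldInterList, List.foldr_cons, evalC_codeInter] at *
    rw [ih]
    ext S
    simp only [mem_inter_iff, mem_iInter, List.mem_cons]
    constructor
    · rintro ⟨ha, hl⟩ q (rfl | hq)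
      exacts [ha, hl q hq]
    · intro h
      exact ⟨h a (Or.inl rfl), fun q hq => h q (Or.inr hq)⟩

noncomputable def codeCompl (F : Code) : Code := foldInterList (F.toList.map negLit)

lemma evalC_codeCompl (F : Code) : evalC (codeCompl F) = (evalC F)ᶜ := by
  rw [codeCompl, evalC_foldInterList]
  ext S
  constructor
  · intro h
    rw [mem_compl_iff, mem_evalC]
    rintro ⟨pq, hpq, hlit⟩
    have h2 : S ∈ evalC (negLit pq) :=
      mem_iInter₂.1 h (negLit pq) (List.mem_map.2 ⟨pq, Finset.mem_toList.2 hpq, rfl⟩)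
    rw [evalC_negLit] at h2
    exact h2 hlit
  · intro h
    refine mem_iInter₂.2 ?_
    rintro q hq
    obtain ⟨pq, hpq, rfl⟩ := List.mem_map.1 hq
    rw [evalC_negLit]
    intro hlit
    exact h (mem_evalC.2 ⟨pq, Finset.mem_toList.1 hpq, hlit⟩)

/-- `lof σ n` = the list `[σ 0, ..., σ (n-1)]`. -/
def lof (σ : ℕ → ℕ) (n : ℕ) : List ℕ := List.ofFn fun i : Fin n => σ i

lemma length_lof (σ : ℕ → ℕ) (n : ℕ) : (lof σ n).length = n := by simp [lof]

lemma getD_lof {σ : ℕ → ℕ} {n i : ℕ} (h : i < n) : (lof σ n).getD i 0 = σ i := by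
  rw [List.getD_eq_getElem _ _ (by simpa [lof] using h)]
  simp [lof]

lemma take_lof (σ : ℕ → ℕ) {k n : ℕ} (h : k ≤ n) : (lof σ n).take k = lof σ k := by
  apply List.ext_getElem
  · simp [lof]; omega
  · intro i h1 h2
    simp only [List.getElem_take, lof, List.getElem_ofFn]

def Akernel (c : List ℕ → Code) : Set SSp :=
  ⋃ σ : ℕ → ℕ, ⋂ n : ℕ, evalC (c (lof σ n))

def IsSous (B : Set SSp) : Prop := ∃ c : List ℕ → Code, B = Akernel c

/-- monotonization of a code scheme -/
noncomputable def cmono (c : List ℕ → Code) (t : List ℕ) : Code :=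
  foldInterList ((List.range (t.length + 1)).map fun k => c (t.take k))

lemma evalC_cmono (c : List ℕ → Code) (t : List ℕ) :
    evalC (cmono c t) = ⋂ k ∈ Finset.range (t.length + 1), evalC (c (t.take k)) := by
  rw [cmono, evalC_foldInterList]
  ext S
  simp only [mem_iInter, List.mem_map, List.mem_range, Finset.mem_range]
  constructor
  · intro h k hk
    exact h _ ⟨k, hk, rfl⟩
  · rintro h q ⟨k, hk, rfl⟩
    exact h k hk

lemma mem_evalC_cmono {c : List ℕ → Code} {S : SSp} {t : List ℕ} :
    S ∈ evalC (cmono c t) ↔ ∀ k ≤ t.length, S ∈ evalC (c (t.take k)) := by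
  rw [evalC_cmono]
  simp only [mem_iInter, Finset.mem_range]
  exact ⟨fun h k hk => h k (by omega), fun h k hk => h k (by omega)⟩

lemma akernel_cmono (c : List ℕ → Code) : Akernel (cmono c) = Akernel c := by
  ext S
  simp only [Akernel, mem_iUnion, mem_iInter]
  constructor
  · rintro ⟨σ, h⟩
    refine ⟨σ, fun n => ?_⟩
    have := mem_evalC_cmono.1 (h n) n (by simp [length_lof])
    rwa [take_lof σ (le_refl n)] at this
  · rintro ⟨σ, h⟩
    refine ⟨σ, fun n => mem_evalC_cmono.2 fun k hk => ?_⟩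
    rw [length_lof] at hk
    rw [take_lof σ hk]
    exact h k

/-- key monotonicity property -/
lemma cmono_antitone {c : List ℕ → Code} {S : SSp} {τ : ℕ → ℕ} {m m' : ℕ} (h : m' ≤ m)
    (hS : S ∈ evalC (cmono c (lof τ m))) : S ∈ evalC (cmono c (lof τ m')) := by
  rw [mem_evalC_cmono] at *
  intro k hk
  rw [length_lof] at hk
  rw [take_lof τ hk]
  have := hS k (by rw [length_lof]; omega)
  rwa [take_lof τ (by omega)] at this

-- ### the merge
noncomputable def gE : (ℕ ⊕ ℕ × ℕ) ≃ ℕ := Denumerable.eqv (ℕ ⊕ ℕ × ℕ)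

noncomputable def gI (k : ℕ) : ℕ := gE (Sum.inl k)
noncomputable def gJ (n m : ℕ) : ℕ := gE (Sum.inr (n, m))

noncomputable def need (n m : ℕ) : ℕ :=
  max ((Finset.range n).sup fun k => gI k + 1) ((Finset.range m).sup fun k => gJ n k + 1)

lemma gI_lt_need {k n m : ℕ} (h : k < n) : gI k < need n m := by
  have h1 : gI k + 1 ≤ (Finset.range n).sup (fun k => gI k + 1) :=
    Finset.le_sup (f := fun k => gI k + 1) (Finset.mem_range.2 h)
  have h2 : (Finset.range n).sup (fun k => gI k + 1) ≤ need n m := le_max_left _ _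
  omega

lemma gJ_lt_need {n m k : ℕ} (h : k < m) : gJ n k < need n m := by
  have h1 : gJ n k + 1 ≤ (Finset.range m).sup (fun k => gJ n k + 1) :=
    Finset.le_sup (f := fun k => gJ n k + 1) (Finset.mem_range.2 h)
  have h2 : (Finset.range m).sup (fun k => gJ n k + 1) ≤ need n m := le_max_right _ _
  omega

noncomputable def readable (j : ℕ) : Finset (ℕ × ℕ) :=
  ((Finset.range j).image fun i =>
    match gE.symm i with
    | Sum.inl _ => (0, 0)
    | Sum.inr (n, k) => (n, k + 1)).filter fun p => 1 ≤ p.2 ∧ need p.1 p.2 ≤ j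

lemma mem_readable_of {n m j : ℕ} (hm : 1 ≤ m) (hj : need n m ≤ j) : (n, m) ∈ readable j := by
  rw [readable, Finset.mem_filter]
  refine ⟨Finset.mem_image.2 ⟨gJ n (m-1), Finset.mem_range.2 (lt_of_lt_of_le (gJ_lt_need (by omega)) hj), ?_⟩, hm, hj⟩
  rw [gJ, Equiv.symm_apply_apply]
  simp only []
  congr 1
  omega

lemma of_mem_readable {p : ℕ × ℕ} {j : ℕ} (h : p ∈ readable j) : 1 ≤ p.2 ∧ need p.1 p.2 ≤ j :=
  (Finset.mem_filter.1 h).2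

noncomputable def exσ (s : List ℕ) (n : ℕ) : List ℕ := List.ofFn fun k : Fin n => s.getD (gI k) 0
noncomputable def exτ (s : List ℕ) (n : ℕ) : ℕ → ℕ := fun k => s.getD (gJ n k) 0

lemma lof_congr {f g : ℕ → ℕ} {m : ℕ} (h : ∀ k, k < m → f k = g k) : lof f m = lof g m := by
  unfold lof
  congr 1
  funext k
  exact h k k.2

lemma exσ_lof {ρ : ℕ → ℕ} {j n m : ℕ} (h : need n m ≤ j) :
    exσ (lof ρ j) n = lof (fun k => ρ (gI k)) n := by
  unfold exσ lof
  congr 1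
  funext k
  exact getD_lof (lt_of_lt_of_le (gI_lt_need k.2) h)

lemma exτ_lof_eq {ρ : ℕ → ℕ} {j n m k : ℕ} (hk : k < m) (h : need n m ≤ j) :
    exτ (lof ρ j) n k = ρ (gJ n k) := by
  unfold exτ
  exact getD_lof (lt_of_lt_of_le (gJ_lt_need hk) h)

/-- merged scheme, given family of (already monotonized) schemes -/
noncomputable def mergeG (d : List ℕ → List ℕ → Code) (s : List ℕ) : Code :=
  foldInterList ((readable s.length).toList.map fun p =>
    d (exσ s p.1) (lof (exτ s p.1) p.2))

lemma mem_mergeG {d : List ℕ → List ℕ → Code} {s : List ℕ} {S : SSp} :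
    S ∈ evalC (mergeG d s) ↔ ∀ p ∈ readable s.length,
      S ∈ evalC (d (exσ s p.1) (lof (exτ s p.1) p.2)) := by
  rw [mergeG, evalC_foldInterList]
  simp only [mem_iInter, List.mem_map, Finset.mem_toList]
  constructor
  · intro h p hp
    exact h _ ⟨p, hp, rfl⟩
  · rintro h q ⟨p, hp, rfl⟩
    exact h p hp

theorem isSous_souslin (h : List ℕ → Set SSp) (hh : ∀ s, IsSous (h s)) :
    IsSous (⋃ σ : ℕ → ℕ, ⋂ n : ℕ, h (lof σ n)) := by
  choose c hc using hh
  -- monotonized schemes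
  set d : List ℕ → List ℕ → Code := fun s => cmono (c s) with hd
  have hAk : ∀ s, h s = Akernel (d s) := fun s => by rw [hd, akernel_cmono, hc]
  refine ⟨mergeG d, ?_⟩
  ext S
  rw [Akernel]
  simp only [mem_iUnion, mem_iInter]
  constructor
  · -- S ∈ target → S ∈ Akernel (mergeG d)
    rintro ⟨σ, hσ⟩
    have hτ : ∀ n : ℕ, ∃ τ : ℕ → ℕ, ∀ m : ℕ, S ∈ evalC (d (lof σ n) (lof τ m)) := by
      intro n
      have := hσ n
      rw [hAk] at this
      simp only [Akernel, mem_iUnion, mem_iInter] at this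
      exact this
    choose τ hτ using hτ
    refine ⟨fun i => match gE.symm i with
      | Sum.inl k => σ k
      | Sum.inr (n, m) => τ n m, fun j => ?_⟩
    set ρ : ℕ → ℕ := fun i => match gE.symm i with
      | Sum.inl k => σ k
      | Sum.inr (n, m) => τ n m with hρ
    show S ∈ evalC (mergeG d (lof ρ j))
    rw [mem_mergeG]
    rintro ⟨n, m⟩ hp
    obtain ⟨hm1, hneed⟩ := of_mem_readable hp
    rw [length_lof] at hneed
    dsimp only at hneed hm1 ⊢
    have hρI : (fun k => ρ (gI k)) = σ := by
      funext k; simp only [hρ, gI, Equiv.symm_apply_apply]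
    have e1 : exσ (lof ρ j) n = lof σ n := by
      rw [exσ_lof (m := m) hneed, hρI]
    have e2 : lof (exτ (lof ρ j) n) m = lof (τ n) m := by
      refine lof_congr fun k hk => ?_
      rw [exτ_lof_eq hk hneed]
      simp only [hρ, gJ, Equiv.symm_apply_apply]
    rw [e1, e2]
    exact hτ n m
  · -- converse
    rintro ⟨ρ, hρ⟩
    refine ⟨fun k => ρ (gI k), fun n => ?_⟩
    rw [hAk]
    simp only [Akernel, mem_iUnion, mem_iInter]
    refine ⟨fun m => ρ (gJ n m), fun m => ?_⟩
    have key : ∀ m' : ℕ, 1 ≤ m' →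
        S ∈ evalC (d (lof (fun k => ρ (gI k)) n) (lof (fun i => ρ (gJ n i)) m')) := by
      intro m' hm'
      have h1 := hρ (need n m')
      have h2 := mem_mergeG.1 h1 (n, m') (by rw [length_lof]; exact mem_readable_of hm' le_rfl)
      dsimp only at h2
      rw [exσ_lof (m := m') (le_refl _)] at h2
      have e2 : lof (exτ (lof ρ (need n m')) n) m' = lof (fun i => ρ (gJ n i)) m' := by
        refine lof_congr fun k hk => ?_
        exact exτ_lof_eq hk (le_refl _)
      rwa [e2] at h2
    rcases Nat.eq_zero_or_pos m with rfl | hm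
    · exact cmono_antitone (Nat.zero_le 1) (key 1 le_rfl)
    · exact key m hm

-- constants are Sous
lemma isSous_evalC (q : Code) : IsSous (evalC q) := by
  refine ⟨fun _ => q, ?_⟩
  rw [Akernel]
  ext S
  simp

lemma isSous_iUnion {B : ℕ → Set SSp} (hB : ∀ i, IsSous (B i)) : IsSous (⋃ i, B i) := by
  set F : List ℕ → Set SSp := fun s => if s = [] then univ else B (s.headI) with hF
  have : (⋃ i, B i) = ⋃ σ : ℕ → ℕ, ⋂ n : ℕ, F (lof σ n) := by
    ext S
    simp only [mem_iUnion, mem_iInter]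
    constructor
    · rintro ⟨i, hi⟩
      refine ⟨fun _ => i, fun n => ?_⟩
      rcases Nat.eq_zero_or_pos n with rfl | hn
      · simp [hF, lof]
      · have : lof (fun _ => i) n ≠ [] := by
          intro h
          have := length_lof (fun _ => i) n
          rw [h] at this
          simp at this; omega
        rw [hF]
        simp only [if_neg this]
        have : (lof (fun _ => i) n).headI = i := by
          unfold lof
          cases n with
          | zero => omega
          | succ k => simp [List.ofFn_succ]
        rwa [this]
    · rintro ⟨σ, hσ⟩
      have := hσ 1
      have h1 : lof σ 1 ≠ [] := by
        intro h
        have := length_lof σ 1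
        rw [h] at this; simp at this
      rw [hF] at this
      simp only [if_neg h1] at this
      exact ⟨_, this⟩
  rw [this]
  refine isSous_souslin F fun s => ?_
  rw [hF]
  simp only []
  by_cases hs : s = []
  · simp only [hs, if_pos]
    refine ⟨fun _ => codeUniv, ?_⟩
    rw [Akernel]
    ext S
    simp [evalC_codeUniv]
  · simp only [if_neg hs]
    exact hB _

lemma isSous_iInter {B : ℕ → Set SSp} (hB : ∀ i, IsSous (B i)) : IsSous (⋂ i, B i) := by
  set F : List ℕ → Set SSp := fun s => if s = [] then univ else B (s.length - 1) with hF
  have : (⋂ i, B i) = ⋃ σ : ℕ → ℕ, ⋂ n : ℕ, F (lof σ n) := by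
    ext S
    simp only [mem_iUnion, mem_iInter]
    constructor
    · intro h
      refine ⟨fun _ => 0, fun n => ?_⟩
      rcases Nat.eq_zero_or_pos n with rfl | hn
      · simp [hF, lof]
      · have hne : lof (fun _ => 0) n ≠ [] := by
          intro hh
          have := length_lof (fun _ => 0) n
          rw [hh] at this; simp at this; omega
        rw [hF]
        simp only [if_neg hne]
        exact h _
    · rintro ⟨σ, hσ⟩ i
      have := hσ (i + 1)
      have hne : lof σ (i+1) ≠ [] := by
        intro hh
        have := length_lof σ (i+1)
        rw [hh] at this; simp at this
      rw [hF] at this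
      simp only [if_neg hne] at this
      rw [length_lof] at this
      simpa using this
  rw [this]
  refine isSous_souslin F fun s => ?_
  rw [hF]
  simp only []
  by_cases hs : s = []
  · simp only [hs, if_pos]
    refine ⟨fun _ => codeUniv, ?_⟩
    rw [Akernel]; ext S; simp [evalC_codeUniv]
  · simp only [if_neg hs]
    exact hB _

/-- the σ-algebra of bi-Souslin sets -/
def mB : MeasurableSpace SSp where
  MeasurableSet' B := IsSous B ∧ IsSous Bᶜ
  measurableSet_empty := by
    constructor
    · refine ⟨fun _ => ∅, ?_⟩
      rw [Akernel]
      ext S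
      simp only [mem_iUnion, mem_iInter, mem_empty_iff_false, false_iff, not_exists, not_forall]
      intro σ
      refine ⟨0, ?_⟩
      rw [mem_evalC]
      simp
    · rw [compl_empty]
      have := isSous_evalC codeUniv
      rwa [evalC_codeUniv] at this
  measurableSet_compl := by
    rintro B ⟨h1, h2⟩
    exact ⟨h2, by rwa [compl_compl]⟩
  measurableSet_iUnion := by
    intro B hB
    constructor
    · exact isSous_iUnion fun i => (hB i).1
    · rw [compl_iUnion]
      exact isSous_iInter fun i => (hB i).2

lemma measurableSet_mB {B : Set SSp} : MeasurableSet[mB] B ↔ IsSous B ∧ IsSous Bᶜ := Iff.rfl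

/-- cylinders are measurable -/
lemma measurable_cyl (t : List ℕ) : MeasurableSet[mB] {S : SSp | t ∈ S} := by
  constructor
  · have : {S : SSp | t ∈ S} = evalC {({t}, ∅)} := by
      ext S
      rw [mem_evalC]
      simp [litSet]
    rw [this]; exact isSous_evalC _
  · have : {S : SSp | t ∈ S}ᶜ = evalC {(∅, {t})} := by
      ext S
      rw [mem_compl_iff, mem_evalC]
      simp [litSet]
    rw [this]; exact isSous_evalC _

lemma measurable_evalC (q : Code) : MeasurableSet[mB] (evalC q) :=
  ⟨isSous_evalC q, by rw [← evalC_codeCompl]; exact isSous_evalC _⟩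


/-- injective encoding of a (node, code) pair as a list -/
def encNC (s : List ℕ) (q : Code) : List ℕ := [Encodable.encode (s, q)]

lemma encNC_inj {s s' : List ℕ} {q q' : Code} (h : encNC s q = encNC s' q') :
    s = s' ∧ q = q' := by
  have := List.head_eq_of_cons_eq h
  have h2 := Encodable.encode_injective this
  exact ⟨congrArg Prod.fst h2, congrArg Prod.snd h2⟩

/-- minimal-code selection: the code q with minimal encoding s.t. encNC s q ∈ S -/
def selGood (S : SSp) (s : List ℕ) (q : Code) : Prop :=
  encNC s q ∈ S ∧ ∀ q' : Code, encNC s q' ∈ S → Encodable.encode q ≤ Encodable.encode q'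

lemma selGood_unique {S : SSp} {s : List ℕ} {q q' : Code}
    (h : selGood S s q) (h' : selGood S s q') : q = q' := by
  have h1 := h.2 q' h'.1
  have h2 := h'.2 q h.1
  exact Encodable.encode_injective (le_antisymm h1 h2)

lemma selGood_exists {S : SSp} {s : List ℕ} (h : ∃ q : Code, encNC s q ∈ S) :
    ∃ q : Code, selGood S s q := by
  classical
  obtain ⟨q0, hq0⟩ := h
  have hex : ∃ i : ℕ, ∃ q : Code, Encodable.encode q = i ∧ encNC s q ∈ S := ⟨_, q0, rfl, hq0⟩
  obtain ⟨q, hq, hqS⟩ := Nat.find_spec hex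
  refine ⟨q, hqS, fun q' hq' => ?_⟩
  rw [hq]
  exact Nat.find_le ⟨q', rfl, hq'⟩

open Classical in
def sel (S : SSp) (s : List ℕ) : Code :=
  if h : ∃ q : Code, selGood S s q then h.choose else codeUniv

lemma sel_eq_of_selGood {S : SSp} {s : List ℕ} {q : Code} (h : selGood S s q) :
    sel S s = q := by
  rw [sel, dif_pos ⟨q, h⟩]
  exact selGood_unique (Exists.choose_spec (⟨q, h⟩ : ∃ q, selGood S s q)) h

/-- the parameter coding a scheme -/
def Pcode (c : List ℕ → Code) : SSp := {l | ∃ s : List ℕ, l = encNC s (c s)}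

lemma sel_Pcode (c : List ℕ → Code) (s : List ℕ) : sel (Pcode c) s = c s := by
  apply sel_eq_of_selGood
  constructor
  · exact ⟨s, rfl⟩
  · rintro q' ⟨s', hs'⟩
    obtain ⟨rfl, rfl⟩ := encNC_inj hs'
    exact le_rfl

/-- the self-referential Souslin set -/
def WW (s : List ℕ) : Set SSp := {S | S ∈ evalC (sel S s)}

def Utilde : Set SSp := ⋃ σ : ℕ → ℕ, ⋂ n : ℕ, WW (lof σ n)

lemma measurable_selEq (s : List ℕ) (q : Code) : MeasurableSet[mB] {S : SSp | sel S s = q} := by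
  classical
  have hdecomp : {S : SSp | sel S s = q} =
      ({S : SSp | encNC s q ∈ S} ∩
        ⋂ q' : Code, {S : SSp | encNC s q' ∈ S → Encodable.encode q ≤ Encodable.encode q'})
      ∪ (if q = codeUniv then ⋂ q' : Code, {S : SSp | encNC s q' ∈ S}ᶜ else ∅) := by
    ext S
    simp only [mem_setOf_eq, mem_union, mem_inter_iff, mem_iInter, mem_compl_iff]
    constructor
    · intro h
      by_cases hex : ∃ q0 : Code, encNC s q0 ∈ S
      · obtain ⟨q0, hg⟩ := selGood_exists hex
        rw [sel_eq_of_selGood hg] at h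
        subst h
        exact Or.inl ⟨hg.1, fun q' h' => hg.2 q' h'⟩
      · push_neg at hex
        have : sel S s = codeUniv := by
          rw [sel, dif_neg]
          rintro ⟨q0, hq0⟩
          exact hex q0 hq0.1
        rw [this] at h
        subst h
        right
        rw [if_pos rfl]
        simpa using fun q' => hex q'
    · rintro (⟨h1, h2⟩ | h)
      · exact sel_eq_of_selGood ⟨h1, fun q' hq' => h2 q' hq'⟩
      · by_cases hq : q = codeUniv
        · rw [if_pos hq] at h
          simp only [mem_iInter, mem_compl_iff, mem_setOf_eq] at h
          rw [hq, sel, dif_neg]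
          rintro ⟨q0, hq0⟩
          exact h q0 hq0.1
        · rw [if_neg hq] at h
          exact absurd h (notMem_empty S)
  rw [hdecomp]
  refine MeasurableSet.union ?_ ?_
  · refine (measurable_cyl _).inter (MeasurableSet.iInter fun q' => ?_)
    by_cases hle : Encodable.encode q ≤ Encodable.encode q'
    · have : {S : SSp | encNC s q' ∈ S → Encodable.encode q ≤ Encodable.encode q'} = univ := by
        ext S; simp [hle]
      rw [this]; exact MeasurableSet.univ
    · have : {S : SSp | encNC s q' ∈ S → Encodable.encode q ≤ Encodable.encode q'}
          = {S : SSp | encNC s q' ∈ S}ᶜ := by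
        ext S; simp [hle]
      rw [this]; exact (measurable_cyl _).compl
  · by_cases hq : q = codeUniv
    · rw [if_pos hq]
      exact MeasurableSet.iInter fun q' => (measurable_cyl _).compl
    · rw [if_neg hq]; exact @MeasurableSet.empty _ mB
lemma measurable_WW (s : List ℕ) : MeasurableSet[mB] (WW s) := by
  have : WW s = ⋃ q : Code, ({S : SSp | sel S s = q} ∩ evalC q) := by
    ext S
    simp only [WW, mem_setOf_eq, mem_iUnion, mem_inter_iff]
    constructor
    · intro h
      exact ⟨sel S s, ⟨rfl, h⟩⟩
    · rintro ⟨q, hq, hS⟩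
      rw [hq]
      exact hS
  rw [this]
  exact MeasurableSet.iUnion fun q => (measurable_selEq _ q).inter (measurable_evalC q)

def NB : Set SSp := {S | ¬ ∃ b : ℕ → ℕ, ∀ n : ℕ, lof b n ∈ S}

lemma isSous_Utilde : IsSous Utilde :=
  isSous_souslin WW fun s => (measurableSet_mB.1 (measurable_WW s)).1

def Tmap (cU : List ℕ → Code) (S : SSp) : SSp :=
  {u | ∀ k ≤ u.length, S ∈ evalC (cU (u.take k))}

lemma Tmap_branch {cU : List ℕ → Code} (hU : Utilde = Akernel cU) (S : SSp) :
    (∃ b : ℕ → ℕ, ∀ n : ℕ, lof b n ∈ Tmap cU S) ↔ S ∈ Utilde := by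
  rw [hU]
  constructor
  · rintro ⟨b, hb⟩
    refine mem_iUnion.2 ⟨b, mem_iInter.2 fun n => ?_⟩
    have := hb n n (by rw [length_lof])
    rwa [take_lof b le_rfl] at this
  · intro hS
    obtain ⟨σ, hσ⟩ := mem_iUnion.1 hS
    rw [mem_iInter] at hσ
    refine ⟨σ, fun n k hk => ?_⟩
    rw [length_lof] at hk
    rw [take_lof σ hk]
    exact hσ k

def memTCode (cU : List ℕ → Code) (u : List ℕ) : Code :=
  foldInterList ((List.range (u.length + 1)).map fun k => cU (u.take k))

lemma evalC_memTCode (cU : List ℕ → Code) (u : List ℕ) :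
    evalC (memTCode cU u) = {S : SSp | u ∈ Tmap cU S} := by
  rw [memTCode, evalC_foldInterList]
  ext S
  simp only [mem_iInter, List.mem_map, List.mem_range, mem_setOf_eq, Tmap]
  constructor
  · intro h k hk
    exact h _ ⟨k, by omega, rfl⟩
  · rintro h q ⟨k, hk, rfl⟩
    exact h k (by omega)

def litTCode (cU : List ℕ → Code) (pq : Finset (List ℕ) × Finset (List ℕ)) : Code :=
  codeInter (foldInterList (pq.1.toList.map (memTCode cU)))
    (foldInterList (pq.2.toList.map fun u => codeCompl (memTCode cU u)))

lemma evalC_litTCode (cU : List ℕ → Code) (pq : Finset (List ℕ) × Finset (List ℕ)) :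
    evalC (litTCode cU pq) = Tmap cU ⁻¹' (litSet pq) := by
  rw [litTCode, evalC_codeInter, evalC_foldInterList, evalC_foldInterList]
  ext S
  rw [mem_preimage]
  simp only [litSet, mem_inter_iff, mem_iInter, List.mem_map, Finset.mem_toList, mem_setOf_eq]
  constructor
  · rintro ⟨h1, h2⟩
    constructor
    · intro u hu
      have := h1 _ ⟨u, by simpa using hu, rfl⟩
      rw [evalC_memTCode] at this
      exact this
    · intro u hu hmem
      have := h2 _ ⟨u, hu, rfl⟩
      rw [evalC_codeCompl, evalC_memTCode] at this
      exact this hmem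
  · rintro ⟨h1, h2⟩
    constructor
    · rintro q ⟨u, hu, rfl⟩
      rw [evalC_memTCode]
      exact h1 (by simpa using hu)
    · rintro q ⟨u, hu, rfl⟩
      rw [evalC_codeCompl, evalC_memTCode]
      exact fun hmem => h2 u hu hmem

def preCode (cU : List ℕ → Code) (F : Code) : Code :=
  F.toList.foldr (fun pq acc => litTCode cU pq ∪ acc) ∅

lemma evalC_empty : evalC (∅ : Code) = ∅ := by
  ext S
  rw [mem_evalC]
  simp

lemma evalC_preCode (cU : List ℕ → Code) (F : Code) :
    evalC (preCode cU F) = Tmap cU ⁻¹' evalC F := by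
  rw [preCode]
  ext S
  have : ∀ l : List (Finset (List ℕ) × Finset (List ℕ)),
      (S ∈ evalC (l.foldr (fun pq acc => litTCode cU pq ∪ acc) ∅) ↔
        ∃ pq ∈ l, Tmap cU S ∈ litSet pq) := by
    intro l
    induction l with
    | nil => simp [evalC_empty]
    | cons a l ih =>
      rw [List.foldr_cons, evalC_union, mem_union, ih]
      constructor
      · rintro (h | ⟨pq, hpq, hS⟩)
        · rw [evalC_litTCode, mem_preimage] at h
          exact ⟨a, List.mem_cons_self, h⟩
        · exact ⟨pq, List.mem_cons_of_mem a hpq, hS⟩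
      · rintro ⟨pq, hpq, hS⟩
        rcases List.mem_cons.1 hpq with rfl | h
        · left; rw [evalC_litTCode, mem_preimage]; exact hS
        · right; exact ⟨pq, h, hS⟩
  rw [this]
  rw [mem_preimage, mem_evalC]
  constructor
  · rintro ⟨pq, hpq, h⟩
    exact ⟨pq, Finset.mem_toList.1 hpq, h⟩
  · rintro ⟨pq, hpq, h⟩
    exact ⟨pq, Finset.mem_toList.2 hpq, h⟩

theorem not_isSous_NB : ¬ IsSous NB := by
  rintro ⟨cN, hN⟩
  obtain ⟨cU, hcU⟩ := isSous_Utilde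
  set cD : List ℕ → Code := fun s => preCode cU (cN s) with hcD
  have hΔ : Utildeᶜ = Akernel cD := by
    have h1 : Utildeᶜ = Tmap cU ⁻¹' NB := by
      ext S
      rw [mem_compl_iff, mem_preimage]
      rw [← Tmap_branch hcU S]
      simp only [NB, mem_setOf_eq]
    rw [h1, hN]
    ext S
    simp only [mem_preimage, Akernel, mem_iUnion, mem_iInter]
    constructor
    · rintro ⟨σ, hσ⟩
      refine ⟨σ, fun n => ?_⟩
      rw [hcD]
      simp only [evalC_preCode, mem_preimage]
      exact hσ n
    · rintro ⟨σ, hσ⟩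
      refine ⟨σ, fun n => ?_⟩
      have := hσ n
      rw [hcD] at this
      simp only [evalC_preCode, mem_preimage] at this
      exact this
  -- diagonalization at the parameter P coding cD
  set P := Pcode cD with hP
  have hmem : P ∈ Utildeᶜ ↔ P ∈ Utilde := by
    rw [hΔ]
    simp only [Akernel, mem_iUnion, mem_iInter]
    rw [Utilde]
    simp only [mem_iUnion, mem_iInter, WW, mem_setOf_eq]
    constructor
    · rintro ⟨σ, hσ⟩
      refine ⟨σ, fun n => ?_⟩
      rw [sel_Pcode cD]
      exact hσ n
    · rintro ⟨σ, hσ⟩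
      refine ⟨σ, fun n => ?_⟩
      have := hσ n
      rwa [sel_Pcode cD] at this
  rw [mem_compl_iff] at hmem
  tauto

lemma compact_interior_empty (K : Set (ℕ → ℕ)) (hK : IsCompact K) :
    interior K = ∅ := by
  by_contra h
  obtain ⟨x, hx⟩ := nonempty_iff_ne_empty.2 h
  have hfin : ∀ m : ℕ, ((fun y => y m) '' K).Finite := fun m =>
    (hK.image (continuous_apply m)).finite_of_discrete
  have hex : ∀ m : ℕ, ∃ v : ℕ, v ∉ (fun y => y m) '' K := by
    intro m
    have := (hfin m).infinite_compl
    exact this.nonempty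
  choose v hv using hex
  have htend : Tendsto (fun k => Function.update x k (v k)) atTop (𝓝 x) := by
    rw [tendsto_pi_nhds]
    intro i
    apply Tendsto.congr' (f₁ := fun _ => x i)
    · filter_upwards [eventually_gt_atTop i] with k hk
      rw [Function.update_of_ne (by omega)]
    · exact tendsto_const_nhds
  have : ∀ᶠ k in atTop, Function.update x k (v k) ∈ interior K :=
    htend.eventually (IsOpen.mem_nhds isOpen_interior hx)
  obtain ⟨k, hk⟩ := this.exists
  exact hv k ⟨_, interior_subset hk, Function.update_self _ _ _⟩

lemma not_sigmaCompact_univ : ¬ IsSigmaCompact (Set.univ : Set (ℕ → ℕ)) := by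
  rintro ⟨K, hKc, hKu⟩
  letI := upgradeIsCompletelyMetrizable (ℕ → ℕ)
  obtain ⟨i, hi⟩ := nonempty_interior_of_iUnion_of_closed
    (fun i => (hKc i).isClosed) hKu
  rw [compact_interior_empty _ (hKc i)] at hi
  exact hi.ne_empty rfl

/-- the list of odd-indexed entries of x, length n -/
def oddL (n : ℕ) (x : ℕ → ℕ) : List ℕ := List.ofFn (fun i : Fin n => x (2*i+1))

/-- the closed set associated to S ⊆ List ℕ -/
def KS (S : Set (List ℕ)) : Set (ℕ → ℕ) :=
  {x | ∀ n : ℕ, oddL n x ∈ S ∨ ∀ m : ℕ, 2*n ≤ m → x m = 0}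

lemma isClosed_KS (S : Set (List ℕ)) : IsClosed (KS S) := by
  have : KS S = ⋂ n : ℕ, ({x : ℕ → ℕ | oddL n x ∈ S} ∪ ⋂ m : ℕ, {x | 2*n ≤ m → x m = 0}) := by
    ext x; simp only [KS, mem_setOf_eq, mem_iInter, mem_union, mem_setOf_eq]
  rw [this]
  refine isClosed_iInter fun n => IsClosed.union ?_ (isClosed_iInter fun m => ?_)
  · have : {x : ℕ → ℕ | oddL n x ∈ S}
        = (fun (x : ℕ → ℕ) (i : Fin n) => x (2*i+1)) ⁻¹' {v | List.ofFn v ∈ S} := rfl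
    rw [this]
    exact (isClosed_discrete _).preimage (continuous_pi fun i => continuous_apply _)
  · by_cases h : 2*n ≤ m
    · have : {x : ℕ → ℕ | 2*n ≤ m → x m = 0} = (fun x : ℕ → ℕ => x m) ⁻¹' {0} := by
        ext x; simp [h]
      rw [this]
      exact (isClosed_discrete _).preimage (continuous_apply m)
    · have : {x : ℕ → ℕ | 2*n ≤ m → x m = 0} = univ := by
        ext x; simp [h]
      rw [this]; exact isClosed_univ

/-- eventually zero sequences are countable -/
lemma countable_evzero : Set.Countable {x : ℕ → ℕ | ∃ N, ∀ m, N ≤ m → x m = 0} := by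
  have : {x : ℕ → ℕ | ∃ N, ∀ m, N ≤ m → x m = 0}
      = ⋃ N : ℕ, Set.range (fun (u : Fin N → ℕ) (m : ℕ) => if h : m < N then u ⟨m, h⟩ else 0) := by
    ext x
    simp only [mem_setOf_eq, mem_iUnion, mem_range]
    constructor
    · rintro ⟨N, hN⟩
      refine ⟨N, fun i => x i, ?_⟩
      ext m
      by_cases h : m < N <;> simp [h]
      exact (hN m (by omega)).symm
    · rintro ⟨N, u, rfl⟩
      exact ⟨N, fun m hm => by simp [Nat.not_lt.2 hm]⟩
  rw [this]
  exact countable_iUnion fun N => countable_range _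

lemma KS_countable_of_no_branch (S : Set (List ℕ))
    (h : ¬ ∃ b : ℕ → ℕ, ∀ n : ℕ, (List.ofFn fun i : Fin n => b i) ∈ S) :
    (KS S).Countable := by
  refine countable_evzero.mono fun x hx => ?_
  by_contra hc
  apply h
  refine ⟨fun i => x (2*i+1), fun n => ?_⟩
  rcases hx n with h1 | h2
  · exact h1
  · exact absurd ⟨2*n, h2⟩ hc

lemma KS_not_sigmaCompact_of_branch (S : Set (List ℕ))
    (b : ℕ → ℕ) (hb : ∀ n : ℕ, (List.ofFn fun i : Fin n => b i) ∈ S) :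
    ¬ IsSigmaCompact (KS S) := by
  intro hsc
  set C : Set (ℕ → ℕ) := {x | ∀ i : ℕ, x (2*i+1) = b i} with hC
  have hCsub : C ⊆ KS S := by
    intro x hx n
    left
    have : oddL n x = List.ofFn fun i : Fin n => b i := by
      unfold oddL
      congr 1
      funext i
      exact hx i
    rw [this]; exact hb n
  have hCclosed : IsClosed C := by
    have : C = ⋂ i : ℕ, (fun x : ℕ → ℕ => x (2*i+1)) ⁻¹' {b i} := by
      ext x; simp [hC]
    rw [this]
    exact isClosed_iInter fun i => (isClosed_discrete _).preimage (continuous_apply _)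
  -- C is sigma-compact
  obtain ⟨K, hKc, hKu⟩ := hsc
  have hCsc : IsSigmaCompact C := by
    refine ⟨fun n => K n ∩ C, fun n => (hKc n).inter_right hCclosed, ?_⟩
    rw [← iUnion_inter, hKu]
    exact inter_eq_right.2 hCsub
  -- project to evens
  have hp : Continuous (fun (x : ℕ → ℕ) (i : ℕ) => x (2*i)) :=
    continuous_pi fun i => continuous_apply _
  have himg : (fun (x : ℕ → ℕ) (i : ℕ) => x (2*i)) '' C = univ := by
    refine eq_univ_of_forall fun y => ?_
    refine ⟨fun m => if m % 2 = 0 then y (m/2) else b (m/2), fun i => by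
      have h1 : (2*i+1) % 2 = 1 := by omega
      have h2 : (2*i+1)/2 = i := by omega
      simp [h1, h2], ?_⟩
    funext i
    simp only []
    have h1 : (2*i) % 2 = 0 := by omega
    have h2 : (2*i) / 2 = i := by omega
    simp [h1, h2]
  have := hCsc.image hp
  rw [himg] at this
  exact not_sigmaCompact_univ this




/-! ### glue: the closed-set-valued map and its Effros measurability -/

def ext0 (u : List ℕ) : ℕ → ℕ := fun m => u.getD m 0

def cylSet (u : List ℕ) : Set (ℕ → ℕ) := {y | ∀ i < u.length, y i = u.getD i 0}

lemma ext0_mem_KS {S : Set (List ℕ)} {u : List ℕ} {x : ℕ → ℕ} (hx : x ∈ KS S)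
    (hu : ∀ i < u.length, x i = u.getD i 0) : ext0 u ∈ KS S := by
  intro n
  by_cases hn : 2 * n ≤ u.length
  · have hodd : oddL n (ext0 u) = oddL n x := by
      unfold oddL
      congr 1
      funext i
      have hi : 2 * (i : ℕ) + 1 < u.length := by have := i.2; omega
      rw [ext0, ← hu _ hi]
    rcases hx n with h1 | h2
    · left; rwa [hodd]
    · right
      intro m hm
      by_cases hmu : m < u.length
      · rw [ext0, ← hu _ hmu]
        exact h2 m hm
      · rw [ext0]
        exact List.getD_eq_default _ _ (by omega)
  · right
    intro m hm
    rw [ext0]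
    exact List.getD_eq_default _ _ (by omega)

lemma ext0_mem_cylSet (u : List ℕ) : ext0 u ∈ cylSet u := fun i _ => rfl

lemma exists_cyl_subset {U : Set (ℕ → ℕ)} (hU : IsOpen U) {x : ℕ → ℕ} (hx : x ∈ U) :
    ∃ N : ℕ, cylSet (lof x N) ⊆ U := by
  have hmem : U ∈ nhds x := hU.mem_nhds hx
  rw [nhds_pi, Filter.mem_pi] at hmem
  obtain ⟨I, hIfin, V, hV, hsub⟩ := hmem
  obtain ⟨N, hN⟩ := hIfin.bddAbove
  refine ⟨N + 1, fun y hy => hsub fun i hi => ?_⟩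
  have hiN : i < N + 1 := by
    have := hN hi
    omega
  have : y i = x i := by
    have := hy i (by rwa [length_lof])
    rwa [getD_lof hiN] at this
  rw [this]
  exact mem_of_mem_nhds (hV i)

def KC : SSp → {A : Set (ℕ → ℕ) // IsClosed A} := fun S => ⟨KS S, isClosed_KS S⟩

lemma gen_preimage {U : Set (ℕ → ℕ)} (hU : IsOpen U) :
    KC ⁻¹' {A : {A : Set (ℕ → ℕ) // IsClosed A} | ((A : Set (ℕ → ℕ)) ∩ U).Nonempty}
      = ⋃ u ∈ {u : List ℕ | cylSet u ⊆ U}, {S : SSp | ext0 u ∈ KS S} := by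
  ext S
  simp only [mem_preimage, mem_setOf_eq, mem_iUnion, exists_prop, KC]
  constructor
  · rintro ⟨x, hxK, hxU⟩
    obtain ⟨N, hN⟩ := exists_cyl_subset hU hxU
    refine ⟨lof x N, hN, ext0_mem_KS hxK fun i hi => ?_⟩
    rw [length_lof] at hi
    rw [getD_lof hi]
  · rintro ⟨u, huU, huK⟩
    exact ⟨ext0 u, huK, huU (ext0_mem_cylSet u)⟩

lemma measurable_ext0_mem (u : List ℕ) : MeasurableSet[mB] {S : SSp | ext0 u ∈ KS S} := by
  have : {S : SSp | ext0 u ∈ KS S} = ⋂ n : ℕ,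
      ({S : SSp | oddL n (ext0 u) ∈ S} ∪ {S : SSp | ∀ m, 2 * n ≤ m → ext0 u m = 0}) := by
    ext S
    simp only [KS, mem_setOf_eq, mem_iInter, mem_union]
  rw [this]
  refine MeasurableSet.iInter fun n => MeasurableSet.union (measurable_cyl _) ?_
  by_cases h : ∀ m, 2 * n ≤ m → ext0 u m = 0
  · have : {S : SSp | ∀ m, 2 * n ≤ m → ext0 u m = 0} = univ := by
      ext S
      simp only [mem_setOf_eq, mem_univ, iff_true]
      exact h
    rw [this]; exact @MeasurableSet.univ _ mB
  · have : {S : SSp | ∀ m, 2 * n ≤ m → ext0 u m = 0} = ∅ := by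
      ext S; simp only [mem_setOf_eq, mem_empty_iff_false, iff_false]; exact h
    rw [this]; exact @MeasurableSet.empty _ mB

lemma measurable_KC : @Measurable SSp _ mB (effrosSigma (ℕ → ℕ)) KC := by
  refine @measurable_generateFrom _ _ mB _ _ ?_
  rintro t ⟨U, hU, rfl⟩
  rw [gen_preimage hU]
  exact MeasurableSet.biUnion (Set.to_countable _) fun u _ => measurable_ext0_mem u

/-- the master combinatorial conclusion -/
theorem master_ne (h : List ℕ → Set SSp) (hmeas : ∀ s, MeasurableSet[mB] (h s)) :
    (⋃ σ : ℕ → ℕ, ⋂ n : ℕ, h (lof σ n)) ≠ NB := by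
  intro he
  exact not_isSous_NB (he ▸ isSous_souslin h fun s => (measurableSet_mB.1 (hmeas s)).1)

end AuxSouslin

theorem souslin_set_containing_countable_closed_sets_contains_non_sigmaCompact
    (𝓐 : Set {A : Set (ℕ → ℕ) // IsClosed A})
    (h𝓐 : IsSouslinIn (effrosSigma (ℕ → ℕ)) 𝓐)
    (hcount : ∀ A : {A : Set (ℕ → ℕ) // IsClosed A},
      (A : Set (ℕ → ℕ)).Countable → A ∈ 𝓐) :
    ∃ A ∈ 𝓐, ¬ IsSigmaCompact (A : Set (ℕ → ℕ)) := by
  by_contra hcon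
  push_neg at hcon
  obtain ⟨f, hf, hAeq⟩ := h𝓐
  set h : List ℕ → Set SSp := fun s => KC ⁻¹' (f s) with hh
  have hmeas : ∀ s, MeasurableSet[mB] (h s) := fun s => measurable_KC (hf s)
  have hiff : ∀ S : SSp, (KC S ∈ 𝓐 ↔ S ∈ NB) := by
    intro S
    constructor
    · intro hmem
      by_contra hnb
      rw [NB, mem_setOf_eq, not_not] at hnb
      obtain ⟨b, hb⟩ := hnb
      exact KS_not_sigmaCompact_of_branch S b hb (hcon (KC S) hmem)
    · intro hnb
      exact hcount (KC S) (KS_countable_of_no_branch S hnb)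
  have hEq : (⋃ σ : ℕ → ℕ, ⋂ n : ℕ, h (lof σ n)) = NB := by
    ext S
    rw [← hiff S]
    simp only [mem_iUnion, mem_iInter, hh, mem_preimage]
    rw [hAeq]
    simp only [mem_iUnion, mem_iInter]
    rfl
  exact master_ne h hmeas hEq
end

section
/- (Hurewicz) Let I = [0,1] and let ℚ be the set of rationals in I. Every Souslin set in the Effros Borel space (F(I), 𝓑_{F(I)}) that contains all compact subsets of ℚ contains an element intersecting I ∖ ℚ. -/
open Set Topology TopologicalSpace MeasureTheory

namespace HurAux

noncomputable def enumQ : ℕ → ℚ := (exists_surjective_nat ℚ).choose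

lemma enumQ_surj : Function.Surjective enumQ := (exists_surjective_nat ℚ).choose_spec

/-- left endpoint of the tentative child slot -/
def uq (I : ℚ × ℚ) (a : ℕ) : ℚ := I.1 + I.2/4^(a+2)
/-- length of child intervals -/
def tq (I : ℚ × ℚ) (a : ℕ) : ℚ := (I.2/4^(a+1) - I.2/4^(a+2))/4

/-- child interval: inside `(p, p+l]`, avoiding `r`, close to `p` for large `a`. -/
noncomputable def chld (I : ℚ × ℚ) (r : ℚ) (a : ℕ) : ℚ × ℚ :=
  if uq I a ≤ r ∧ r ≤ uq I a + tq I a then (I.1 + I.2/4^(a+1) - tq I a, tq I a)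
  else (uq I a, tq I a)

variable {I : ℚ × ℚ} {r : ℚ} {a : ℕ}

lemma tq_pos (hl : 0 < I.2) : 0 < tq I a := by
  unfold tq
  have h1 : I.2/4^(a+2) < I.2/4^(a+1) :=
    div_lt_div_of_pos_left hl (by positivity) (by
      gcongr <;> norm_num)
  linarith

lemma chld_snd : (chld I r a).2 = tq I a := by unfold chld; split <;> rfl

lemma chld_pos (hl : 0 < I.2) : 0 < (chld I r a).2 := by
  rw [chld_snd]; exact tq_pos hl

lemma uq_gt (hl : 0 < I.2) : I.1 < uq I a := by
  unfold uq
  have : 0 < I.2/4^(a+2) := by positivity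
  linarith

lemma tq_le (hl : 0 < I.2) : tq I a ≤ I.2/4^(a+1)/4 := by
  unfold tq
  have h : 0 ≤ I.2/4^(a+2) := by positivity
  linarith

lemma chld_fst_gt (hl : 0 < I.2) : I.1 < (chld I r a).1 := by
  have hu := uq_gt (a := a) hl
  have ht := tq_pos (a := a) hl
  have h42 : (0:ℚ) < 4^(a+2) := by positivity
  have h41 : (0:ℚ) < 4^(a+1) := by positivity
  have key : uq I a + 3 * tq I a = I.1 + I.2/4^(a+1) - tq I a := by
    unfold uq tq; ring
  unfold chld; split
  · nlinarith
  · exact hu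

lemma chld_ub (hl : 0 < I.2) :
    (chld I r a).1 + (chld I r a).2 ≤ I.1 + I.2/4^(a+1) := by
  have key : uq I a + 4 * tq I a = I.1 + I.2/4^(a+1) := by unfold uq tq; ring
  have ht := tq_pos (a := a) hl
  unfold chld; split
  · simp only; linarith
  · simp only; linarith

lemma chld_avoid (hl : 0 < I.2) :
    r < (chld I r a).1 ∨ (chld I r a).1 + (chld I r a).2 < r := by
  have ht := tq_pos (a := a) hl
  have key : uq I a + 3 * tq I a = I.1 + I.2/4^(a+1) - tq I a := by
    unfold uq tq; ring
  unfold chld; split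
  · left; simp only; rcases ‹_ ∧ _› with ⟨h1, h2⟩; linarith
  · rcases not_and_or.1 ‹¬ _› with h | h
    · left; simp only; linarith [not_le.1 h]
    · right; simp only; linarith [not_le.1 h]


/-! ### The interval scheme indexed by `List ℕ` -/

noncomputable def Jaux (s : List ℕ) : (ℚ × ℚ) × ℕ :=
  s.foldl (fun st a => (chld st.1 (enumQ st.2) a, st.2 + 1)) ((1/4, 1/4), 0)

noncomputable def J (s : List ℕ) : ℚ × ℚ := (Jaux s).1

lemma Jaux_snd (s : List ℕ) : (Jaux s).2 = s.length := by
  have key : ∀ (l : List ℕ) (init : (ℚ × ℚ) × ℕ),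
      (l.foldl (fun st a => (chld st.1 (enumQ st.2) a, st.2 + 1)) init).2
        = init.2 + l.length := by
    intro l
    induction l with
    | nil => intro init; simp
    | cons b l ih => intro init; simp [List.foldl_cons, ih]; omega
  rw [show Jaux s = s.foldl (fun st a => (chld st.1 (enumQ st.2) a, st.2 + 1)) ((1/4, 1/4), 0) from rfl, key]; simp

lemma J_nil : J [] = (1/4, 1/4) := rfl

lemma J_append (s : List ℕ) (a : ℕ) :
    J (s ++ [a]) = chld (J s) (enumQ s.length) a := by
  unfold J Jaux
  rw [List.foldl_append]
  simp only [List.foldl_cons, List.foldl_nil]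
  congr 1
  · exact congrArg (fun n => enumQ n) (Jaux_snd s)

lemma J_inv (s : List ℕ) :
    0 < (J s).2 ∧ (1/4 : ℚ) ≤ (J s).1 ∧ (J s).1 + (J s).2 ≤ 1/2 ∧ (J s).2 ≤ 1 := by
  induction s using List.reverseRecOn with
  | nil => rw [J_nil]; norm_num
  | append_singleton s a ih =>
    obtain ⟨hl, hlb, hub, hle⟩ := ih
    rw [J_append]
    have h41 : (1:ℚ) ≤ 4^(a+1) := one_le_pow₀ (by norm_num)
    have hd : (J s).2/4^(a+1) ≤ (J s).2 := by
      rw [div_le_iff₀ (by positivity)]; nlinarith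
    refine ⟨chld_pos hl, ?_, ?_, ?_⟩
    · linarith [chld_fst_gt (r := enumQ s.length) (a := a) hl]
    · linarith [chld_ub (r := enumQ s.length) (a := a) hl]
    · have h1 := chld_ub (r := enumQ s.length) (a := a) hl
      have h2 := chld_fst_gt (r := enumQ s.length) (a := a) hl
      linarith

lemma J_pos (s : List ℕ) : 0 < (J s).2 := (J_inv s).1

/-- membership of a real number in the interval coded by `I`. -/
def memJ (I : ℚ × ℚ) (x : ℝ) : Prop := (I.1 : ℝ) ≤ x ∧ x ≤ (I.1 : ℝ) + (I.2 : ℝ)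

lemma memJ_self (s : List ℕ) : memJ (J s) ((J s).1 : ℝ) := by
  have := J_pos s
  refine ⟨le_refl _, ?_⟩
  have h : (0:ℝ) < ((J s).2 : ℝ) := by exact_mod_cast this
  linarith

lemma memJ_chld_mono {x : ℝ} (hl : 0 < I.2) (h : memJ (chld I r a) x) : memJ I x := by
  obtain ⟨h1, h2⟩ := h
  have g1 := chld_fst_gt (r := r) (a := a) hl
  have g2 := chld_ub (r := r) (a := a) hl
  have h41 : (1:ℚ) ≤ 4^(a+1) := one_le_pow₀ (by norm_num)
  have hd : I.2/4^(a+1) ≤ I.2 := by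
    rw [div_le_iff₀ (by positivity)]; nlinarith
  constructor
  · calc (I.1 : ℝ) ≤ ((chld I r a).1 : ℝ) := by exact_mod_cast g1.le
      _ ≤ x := h1
  · calc x ≤ ((chld I r a).1 : ℝ) + ((chld I r a).2 : ℝ) := h2
      _ ≤ (I.1 : ℝ) + (I.2 : ℝ) := by exact_mod_cast le_trans g2 (by linarith)

lemma memJ_chld_close {x : ℝ} (hl : 0 < I.2) (hle : I.2 ≤ 1)
    (h : memJ (chld I r a) x) : (I.1 : ℝ) ≤ x ∧ x ≤ (I.1 : ℝ) + (1/4 : ℝ)^(a+1) := by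
  obtain ⟨h1, h2⟩ := h
  have g1 := chld_fst_gt (r := r) (a := a) hl
  have g2 := chld_ub (r := r) (a := a) hl
  have hcast : ((chld I r a).1 : ℝ) + ((chld I r a).2 : ℝ) ≤ (I.1 : ℝ) + (I.2 : ℝ)/4^(a+1) := by
    exact_mod_cast g2
  have hbound : ((I.2 : ℝ))/4^(a+1) ≤ (1/4 : ℝ)^(a+1) := by
    rw [div_pow, one_pow, div_le_div_iff₀ (by positivity) (by positivity)]
    have : (I.2 : ℝ) ≤ 1 := by exact_mod_cast hle
    nlinarith [(by positivity : (0:ℝ) < (4:ℝ)^(a+1))]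
  constructor
  · calc (I.1 : ℝ) ≤ ((chld I r a).1 : ℝ) := by exact_mod_cast g1.le
      _ ≤ x := h1
  · linarith

lemma memJ_avoid {x : ℝ} (hl : 0 < I.2) (h : memJ (chld I r a) x) : x ≠ (r : ℝ) := by
  rcases chld_avoid (r := r) (a := a) hl with hv | hv
  · intro hx
    have : (r : ℝ) < ((chld I r a).1 : ℝ) := by exact_mod_cast hv
    linarith [h.1, hx ▸ h.1]
  · intro hx
    have : ((chld I r a).1 : ℝ) + ((chld I r a).2 : ℝ) < (r : ℝ) := by exact_mod_cast hv
    have := h.2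
    rw [hx] at this
    linarith

lemma memJ_prefix {x : ℝ} : ∀ {t : List ℕ} {s : List ℕ}, s <+: t → memJ (J t) x → memJ (J s) x := by
  intro t
  induction t using List.reverseRecOn with
  | nil =>
    intro s hs h
    rwa [List.prefix_nil.1 hs]
  | append_singleton t a ih =>
    intro s hs h
    rcases List.prefix_concat_iff.1 hs with rfl | hs'
    · exact h
    · apply ih hs'
      rw [J_append] at h
      exact memJ_chld_mono (J_pos t) h


/-! ### Trees -/

def IsTreeB (T : List ℕ → Bool) : Prop := ∀ s a, T (s ++ [a]) = true → T s = true

def node (σ : ℕ → ℕ) (n : ℕ) : List ℕ := List.ofFn fun i : Fin n => σ i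

def BranchB (σ : ℕ → ℕ) (T : List ℕ → Bool) : Prop := ∀ n, T (node σ n) = true

def Ill (T : List ℕ → Bool) : Prop := ∃ σ, BranchB σ T

lemma node_zero (σ : ℕ → ℕ) : node σ 0 = [] := by simp [node]

lemma node_succ (σ : ℕ → ℕ) (n : ℕ) : node σ (n + 1) = node σ n ++ [σ n] := by
  unfold node
  rw [List.ofFn_succ', List.concat_eq_append]
  simp

lemma node_length (σ : ℕ → ℕ) (n : ℕ) : (node σ n).length = n := by simp [node]

lemma node_prefix (σ : ℕ → ℕ) {m n : ℕ} (h : m ≤ n) : node σ m <+: node σ n := by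
  induction n with
  | zero => rw [Nat.le_zero.1 h]
  | succ n ih =>
    rcases Nat.lt_or_ge m (n+1) with h' | h'
    · exact (ih (Nat.lt_succ_iff.1 h')).trans (by rw [node_succ]; exact List.prefix_append _ _)
    · rw [Nat.le_antisymm h h']

lemma tree_prefix {T : List ℕ → Bool} (hT : IsTreeB T) :
    ∀ {t s : List ℕ}, s <+: t → T t = true → T s = true := by
  intro t
  induction t using List.reverseRecOn with
  | nil => intro s hs h; rwa [List.prefix_nil.1 hs]
  | append_singleton t a ih =>
    intro s hs h
    rcases List.prefix_concat_iff.1 hs with rfl | hs'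
    · exact h
    · exact ih hs' (hT t a h)

/-! ### Points in the unit interval -/

noncomputable def pt (s : List ℕ) : Icc (0:ℝ) 1 :=
  ⟨((J s).1 : ℝ), by
    obtain ⟨hl, hlb, hub, _⟩ := J_inv s
    constructor
    · have h1 : ((1/4 : ℚ) : ℝ) ≤ ((J s).1 : ℝ) := Rat.cast_le.2 hlb
      norm_num at h1
      linarith
    · have h2 : ((J s).1 : ℝ) + ((J s).2 : ℝ) ≤ 1/2 := by
        have := Rat.cast_le (K := ℝ) |>.2 hub
        push_cast at this
        linarith
      have h3 : (0:ℝ) < ((J s).2 : ℝ) := by exact_mod_cast hl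
      linarith⟩

def DD (T : List ℕ → Bool) : Set (Icc (0:ℝ) 1) := {x | ∃ s, T s = true ∧ pt s = x}

/-- L2 : an ill-founded tree gives an irrational point in the closure. -/
lemma ill_irrational {T : List ℕ → Bool} (h : Ill T) :
    ∃ x ∈ closure (DD T), Irrational (x : ℝ) := by
  obtain ⟨σ, hb⟩ := h
  set pn : ℕ → ℝ := fun n => ((J (node σ n)).1 : ℝ) with hpn
  have hmono : StrictMono pn := by
    apply strictMono_nat_of_lt_succ
    intro n
    have := chld_fst_gt (I := J (node σ n)) (r := enumQ (node σ n).length) (a := σ n)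
      (J_pos (node σ n))
    have h2 : (J (node σ (n+1))).1 = (chld (J (node σ n)) (enumQ (node σ n).length) (σ n)).1 := by
      rw [node_succ, J_append]
    show pn n < pn (n+1)
    simp only [hpn]
    rw [h2]
    exact_mod_cast this
  have hbdd : BddAbove (Set.range pn) := by
    refine ⟨1/2, ?_⟩
    rintro x ⟨n, rfl⟩
    obtain ⟨hl, _, hub, _⟩ := J_inv (node σ n)
    have h2 : ((J (node σ n)).1 : ℝ) + ((J (node σ n)).2 : ℝ) ≤ 1/2 := by
      have := Rat.cast_le (K := ℝ) |>.2 hub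
      push_cast at this
      linarith
    have h3 : (0:ℝ) < ((J (node σ n)).2 : ℝ) := by exact_mod_cast hl
    show pn n ≤ 1/2
    simp only [hpn]; linarith
  set x : ℝ := ⨆ n, pn n with hx
  have htend : Filter.Tendsto pn Filter.atTop (nhds x) :=
    tendsto_atTop_ciSup hmono.monotone hbdd
  have hxmem : ∀ m, memJ (J (node σ m)) x := by
    intro m
    constructor
    · exact le_ciSup hbdd m
    · apply ciSup_le
      intro n
      rcases le_or_gt m n with h' | h'
      · exact (memJ_prefix (node_prefix σ h') (memJ_self (node σ n))).2
      · have h1 : pn n ≤ pn m := hmono.monotone h'.le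
        have h2 := (memJ_self (node σ m)).2
        exact h1.trans h2
  have hx01 : x ∈ Icc (0:ℝ) 1 := by
    have := hxmem 0
    rw [node_zero, J_nil] at this
    obtain ⟨h1, h2⟩ := this
    norm_num at h1 h2
    constructor <;> linarith
  have hirr : Irrational x := by
    rintro ⟨q, hq⟩
    obtain ⟨n, rfl⟩ := enumQ_surj q
    have hm := hxmem (n+1)
    rw [node_succ, J_append, node_length] at hm
    exact memJ_avoid (J_pos (node σ n)) hm hq.symm
  refine ⟨⟨x, hx01⟩, ?_, hirr⟩
  apply mem_closure_of_tendsto (f := fun n => pt (node σ n)) (b := Filter.atTop)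
  · rw [tendsto_subtype_rng]
    exact htend
  · filter_upwards with n
    exact ⟨node σ n, hb n, rfl⟩

/-- L3 : for a well-founded tree, every point of the closure is rational. -/
lemma wf_rational {T : List ℕ → Bool} (hT : IsTreeB T) (hni : ¬ Ill T) :
    ∀ y ∈ closure (DD T), ¬ Irrational (y : ℝ) := by
  intro y hy
  obtain ⟨u, hu_mem, hu_lim⟩ := mem_closure_iff_seq_limit.1 hy
  choose s hsT hsp using hu_mem
  set Inf : List ℕ → Prop := fun t => {k | t <+: s k}.Infinite with hInf
  have h0 : Inf [] := by
    have : {k | [] <+: s k} = Set.univ := by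
      ext k; simp [List.nil_prefix]
    rw [hInf]; simp only; rw [this]; exact Set.infinite_univ
  have hmax : ∃ t, Inf t ∧ ∀ a, ¬ Inf (t ++ [a]) := by
    by_contra hcon
    push_neg at hcon
    have hstep : ∀ t, Inf t → ∃ a, Inf (t ++ [a]) := fun t ht => hcon t ht
    choose! F hF using hstep
    set G : ℕ → {t : List ℕ // Inf t} :=
      fun n => Nat.rec ⟨[], h0⟩ (fun _ p => ⟨p.1 ++ [F p.1], hF p.1 p.2⟩) n with hG
    set σ : ℕ → ℕ := fun n => F (G n).1 with hσ
    have hGn : ∀ n, (G n).1 = node σ n := by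
      intro n
      induction n with
      | zero => rw [node_zero]; rfl
      | succ n ih =>
        have hstep : (G (n+1)).1 = (G n).1 ++ [F (G n).1] := rfl
        rw [hstep, node_succ, ← ih]
    apply hni
    refine ⟨σ, fun n => ?_⟩
    have hInfn : Inf (node σ n) := by rw [← hGn]; exact (G n).2
    obtain ⟨k, hk⟩ := hInfn.nonempty
    exact tree_prefix hT hk (hsT k)
  obtain ⟨t, htInf, htmax⟩ := hmax
  have htT : T t = true := by
    obtain ⟨k, hk⟩ := htInf.nonempty
    exact tree_prefix hT hk (hsT k)
  suffices hyt : y = pt t by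
    rw [hyt]
    intro hirr
    exact hirr ⟨(J t).1, rfl⟩
  rcases Set.finite_or_infinite {k | s k = t} with hfin | hinf
  case inr =>
    -- infinitely many exact hits
    have hfreq : ∃ᶠ k in Filter.atTop, u k ∈ ({pt t} : Set (Icc (0:ℝ) 1)) := by
      rw [Nat.frequently_atTop_iff_infinite]
      apply hinf.mono
      intro k hk
      have : pt (s k) = u k := hsp k
      rw [hk] at this
      simp [← this]
    have := mem_closure_of_frequently_of_tendsto hfreq hu_lim
    rwa [closure_singleton, Set.mem_singleton_iff] at this
  case inl =>
    have key : ∀ A : ℕ, dist y (pt t) ≤ (1/4 : ℝ)^(A+1) := by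
      intro A
      set Bad : Set ℕ := {k | s k = t} ∪ ⋃ a ∈ Finset.range (A+1), {k | (t ++ [a]) <+: s k}
        with hBad
      have hBadFin : Bad.Finite := by
        apply Set.Finite.union hfin
        apply Set.Finite.biUnion (Finset.range (A+1)).finite_toSet
        intro a _
        exact Set.not_infinite.1 (htmax a)
      have hK : ({k | t <+: s k} \ Bad).Infinite := htInf.diff hBadFin
      have hfreq : ∃ᶠ k in Filter.atTop,
          dist (u k) (pt t) ∈ Set.Iic ((1/4 : ℝ)^(A+1)) := by
        rw [Nat.frequently_atTop_iff_infinite]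
        apply hK.mono
        rintro k ⟨hk1, hk2⟩
        rw [hBad] at hk2
        simp only [Set.mem_union, Set.mem_iUnion, Finset.mem_range, Set.mem_setOf_eq,
          not_or, not_exists] at hk2
        obtain ⟨hkne, hknb⟩ := hk2
        obtain ⟨d, hd⟩ := hk1
        have hdne : d ≠ [] := by
          rintro rfl
          exact hkne (by rw [← hd, List.append_nil])
        obtain ⟨a, d', rfl⟩ := List.exists_cons_of_ne_nil hdne
        have hpre : (t ++ [a]) <+: s k := ⟨d', by rw [← hd]; simp⟩
        have hA : A + 1 ≤ a := by
          by_contra hA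
          exact hknb a (by omega) hpre
        -- distance estimate
        have hmem : memJ (J (t ++ [a])) ((J (s k)).1 : ℝ) :=
          memJ_prefix hpre (memJ_self (s k))
        rw [J_append] at hmem
        obtain ⟨hc1, hc2⟩ := memJ_chld_close (J_pos t) (J_inv t).2.2.2 hmem
        have hdist : dist (u k) (pt t) ≤ (1/4 : ℝ)^(a+1) := by
          rw [← hsp k, Subtype.dist_eq]
          have : (pt (s k) : ℝ) = ((J (s k)).1 : ℝ) := rfl
          rw [this]
          have : (pt t : ℝ) = ((J t).1 : ℝ) := rfl
          rw [this, Real.dist_eq, abs_le]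
          constructor <;> linarith
        refine Set.mem_Iic.2 (hdist.trans ?_)
        apply pow_le_pow_of_le_one (by norm_num) (by norm_num)
        omega
      have htd : Filter.Tendsto (fun k => dist (u k) (pt t)) Filter.atTop
          (nhds (dist y (pt t))) := hu_lim.dist tendsto_const_nhds
      have := mem_closure_of_frequently_of_tendsto hfreq htd
      rwa [closure_Iic, Set.mem_Iic] at this
    have hdist0 : dist y (pt t) = 0 := by
      by_contra hne
      have hpos : 0 < dist y (pt t) := lt_of_le_of_ne dist_nonneg (Ne.symm hne)
      obtain ⟨n, hn⟩ := exists_pow_lt_of_lt_one hpos (by norm_num : (1/4 : ℝ) < 1)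
      have := key n
      have h2 : ((1:ℝ)/4)^(n+1) ≤ (1/4)^n :=
        pow_le_pow_of_le_one (by norm_num) (by norm_num) (by omega)
      linarith
    exact dist_eq_zero.1 hdist0


/-! ### Basis enumeration -/

lemma exists_basis_enum (α : Type*) [TopologicalSpace α] [SecondCountableTopology α] :
    ∃ V : ℕ → Set α, (∀ k, IsOpen (V k)) ∧
      ∀ U : Set α, IsOpen U → ∀ x ∈ U, ∃ k, x ∈ V k ∧ V k ⊆ U := by
  obtain ⟨b, hbc, _, hb⟩ := exists_countable_basis α
  obtain ⟨V, hV⟩ := Set.Countable.exists_eq_range (hbc.insert ∅) (Set.insert_nonempty _ _)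
  refine ⟨V, ?_, ?_⟩
  · intro k
    have : V k ∈ insert ∅ b := by rw [hV]; exact Set.mem_range_self k
    rcases Set.mem_insert_iff.1 this with h | h
    · rw [h]; exact isOpen_empty
    · exact hb.isOpen h
  · intro U hU x hx
    obtain ⟨v, hvb, hxv, hvU⟩ := hb.exists_subset_of_mem_open hx hU
    have : v ∈ Set.range V := by rw [← hV]; exact Set.mem_insert_of_mem _ hvb
    obtain ⟨k, rfl⟩ := this
    exact ⟨k, hxv, hvU⟩

/-! ### The embedding of the Effros space into the Cantor space -/

open Classical in
noncomputable def eF (V : ℕ → Set (Icc (0:ℝ) 1)) :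
    {A : Set (Icc (0:ℝ) 1) // IsClosed A} → (ℕ → Bool) :=
  fun A k => decide ((A.1 ∩ V k).Nonempty)

lemma measurableSet_cylB (k : ℕ) : MeasurableSet {c : ℕ → Bool | c k = true} := by
  have : {c : ℕ → Bool | c k = true} = (fun c : ℕ → Bool => c k) ⁻¹' {true} := by
    ext c; simp
  rw [this]
  exact (measurable_pi_apply k) (measurableSet_singleton true)

lemma effros_preimage (V : ℕ → Set (Icc (0:ℝ) 1))
    (hVb : ∀ U : Set (Icc (0:ℝ) 1), IsOpen U → ∀ x ∈ U, ∃ k, x ∈ V k ∧ V k ⊆ U)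
    {𝓤 : Set {A : Set (Icc (0:ℝ) 1) // IsClosed A}}
    (h : MeasurableSet[effrosSigma (Icc (0:ℝ) 1)] 𝓤) :
    ∃ B : Set (ℕ → Bool), MeasurableSet B ∧ 𝓤 = eF V ⁻¹' B := by
  apply MeasurableSpace.generateFrom_induction
    (p := fun t (_ : MeasurableSet[effrosSigma (Icc (0:ℝ) 1)] t) =>
      ∃ B : Set (ℕ → Bool), MeasurableSet B ∧ t = eF V ⁻¹' B)
  · rintro t ⟨U, hU, rfl⟩ _
    refine ⟨⋃ k, {c | V k ⊆ U ∧ c k = true}, ?_, ?_⟩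
    · apply MeasurableSet.iUnion
      intro k
      by_cases hk : V k ⊆ U
      · simp only [hk, true_and]
        exact measurableSet_cylB k
      · have : {c : ℕ → Bool | V k ⊆ U ∧ c k = true} = ∅ := by
          ext c; simp [hk]
        rw [this]; exact MeasurableSet.empty
    · ext A
      simp only [Set.mem_setOf_eq, Set.mem_preimage, Set.mem_iUnion, eF, decide_eq_true_eq]
      constructor
      · rintro ⟨x, hxA, hxU⟩
        obtain ⟨k, hxk, hkU⟩ := hVb U hU x hxU
        exact ⟨k, hkU, x, hxA, hxk⟩
      · rintro ⟨k, hkU, x, hxA, hxk⟩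
        exact ⟨x, hxA, hkU hxk⟩
  · exact ⟨∅, MeasurableSet.empty, by simp⟩
  · rintro t _ ⟨B, hBm, rfl⟩
    exact ⟨Bᶜ, hBm.compl, by simp⟩
  · intro g _ hg
    choose B hBm hBe using hg
    exact ⟨⋃ n, B n, MeasurableSet.iUnion hBm, by simp [hBe]⟩
  · exact h

lemma measurableSet_ofFn_fiber (n : ℕ) (s : List ℕ) :
    MeasurableSet {p : (ℕ → ℕ) × (ℕ → Bool) | (List.ofFn fun i : Fin n => p.1 i) = s} := by
  by_cases hn : s.length = n
  · have : {p : (ℕ → ℕ) × (ℕ → Bool) | (List.ofFn fun i : Fin n => p.1 i) = s}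
        = ⋂ i : Fin n, {p | p.1 i = s.get ⟨i, by omega⟩} := by
      ext p
      simp only [Set.mem_setOf_eq, Set.mem_iInter]
      constructor
      · rintro rfl i
        simp
      · intro hi
        apply List.ext_get (by simp [hn])
        intro j h1 h2
        rw [List.get_ofFn]
        have := hi ⟨j, by simpa using h1⟩
        simp at this ⊢
        convert this using 2
    rw [this]
    exact MeasurableSet.iInter fun i =>
      ((measurable_pi_apply (i : ℕ)).comp measurable_fst) (measurableSet_singleton _)
  · have : {p : (ℕ → ℕ) × (ℕ → Bool) | (List.ofFn fun i : Fin n => p.1 i) = s} = ∅ := by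
      ext p
      simp only [Set.mem_setOf_eq, Set.mem_empty_iff_false, iff_false]
      intro hc
      apply hn
      rw [← hc]
      simp
    rw [this]; exact MeasurableSet.empty

lemma souslin_preimage (V : ℕ → Set (Icc (0:ℝ) 1))
    (hVb : ∀ U : Set (Icc (0:ℝ) 1), IsOpen U → ∀ x ∈ U, ∃ k, x ∈ V k ∧ V k ⊆ U)
    {𝓐 : Set {A : Set (Icc (0:ℝ) 1) // IsClosed A}}
    (h𝓐 : IsSouslinIn (effrosSigma (Icc (0:ℝ) 1)) 𝓐) :
    ∃ S : Set (ℕ → Bool), AnalyticSet S ∧ 𝓐 = eF V ⁻¹' S := by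
  obtain ⟨f, hf, hrep⟩ := h𝓐
  choose B hBm hBe using fun s => effros_preimage V hVb (hf s)
  refine ⟨⋃ σ : ℕ → ℕ, ⋂ n, B (List.ofFn fun i : Fin n => σ i), ?_, ?_⟩
  · set E : Set ((ℕ → ℕ) × (ℕ → Bool)) :=
      {p | ∀ n, p.2 ∈ B (List.ofFn fun i : Fin n => p.1 i)} with hE
    have hEm : MeasurableSet E := by
      have : E = ⋂ n, ⋃ s : List ℕ,
          ({p : (ℕ → ℕ) × (ℕ → Bool) | (List.ofFn fun i : Fin n => p.1 i) = s}
            ∩ {p | p.2 ∈ B s}) := by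
        ext p
        simp only [hE, Set.mem_setOf_eq, Set.mem_iInter, Set.mem_iUnion, Set.mem_inter_iff]
        constructor
        · intro h n
          exact ⟨_, rfl, h n⟩
        · rintro h n
          obtain ⟨s, hs, hmem⟩ := h n
          rwa [hs]
      rw [this]
      exact MeasurableSet.iInter fun n => MeasurableSet.iUnion fun s =>
        (measurableSet_ofFn_fiber n s).inter ((hBm s).preimage measurable_snd)
    have himg : (⋃ σ : ℕ → ℕ, ⋂ n, B (List.ofFn fun i : Fin n => σ i)) = Prod.snd '' E := by
      ext x
      simp only [Set.mem_iUnion, Set.mem_iInter, Set.mem_image, hE, Set.mem_setOf_eq, Prod.exists]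
      constructor
      · rintro ⟨σ, hσ⟩
        exact ⟨σ, x, hσ, rfl⟩
      · rintro ⟨σ, y, hy, rfl⟩
        exact ⟨σ, hy⟩
    rw [himg]
    have : PolishSpace (ℕ → Bool) := @instPolishSpaceOfSeparableSpaceOfIsCompletelyMetrizableSpace _ _ inferInstance inferInstance
    exact hEm.analyticSet.image_of_continuous continuous_snd
  · rw [hrep]
    simp only [hBe, Set.preimage_iUnion, Set.preimage_iInter]


/-! ### The tree map and analyticity of the set of well-founded trees -/

noncomputable def KT (T : List ℕ → Bool) : {A : Set (Icc (0:ℝ) 1) // IsClosed A} :=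
  ⟨closure (DD T), isClosed_closure⟩

open Classical in
noncomputable def phiT (V : ℕ → Set (Icc (0:ℝ) 1)) (T : List ℕ → Bool) : ℕ → Bool :=
  fun k => decide (∃ s, T s = true ∧ pt s ∈ V k)

lemma eF_KT (V : ℕ → Set (Icc (0:ℝ) 1)) (hVo : ∀ k, IsOpen (V k)) (T : List ℕ → Bool) :
    eF V (KT T) = phiT V T := by
  funext k
  simp only [eF, phiT, KT]
  refine decide_eq_decide.mpr ?_
  constructor
  · rintro ⟨x, hxc, hxV⟩
    obtain ⟨z, hzV, hzD⟩ := mem_closure_iff.1 hxc (V k) (hVo k) hxV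
    obtain ⟨t, ht, rfl⟩ := hzD
    exact ⟨t, ht, hzV⟩
  · rintro ⟨t, ht, htV⟩
    exact ⟨pt t, subset_closure ⟨t, ht, rfl⟩, htV⟩

lemma measurableSet_boolSet {α : Type*} [MeasurableSpace α] {f : α → Bool}
    (hf : Measurable f) : MeasurableSet {x | f x = true} := by
  have : {x | f x = true} = f ⁻¹' {true} := by ext x; simp
  rw [this]
  exact hf (measurableSet_singleton true)

lemma measurableSet_eqBool {α : Type*} [MeasurableSpace α] {f g : α → Bool}
    (hf : Measurable f) (hg : Measurable g) : MeasurableSet {x | f x = g x} := by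
  have : {x | f x = g x} = (f ⁻¹' {true} ∩ g ⁻¹' {true}) ∪ (f ⁻¹' {false} ∩ g ⁻¹' {false}) := by
    ext x
    cases hfx : f x <;> cases hgx : g x <;> simp [hfx, hgx]
  rw [this]
  exact ((hf (measurableSet_singleton _)).inter (hg (measurableSet_singleton _))).union
    ((hf (measurableSet_singleton _)).inter (hg (measurableSet_singleton _)))

lemma measurable_of_bool {α : Type*} [MeasurableSpace α] {f : α → Bool}
    (h : MeasurableSet (f ⁻¹' {true})) : Measurable f := by
  apply measurable_to_countable'
  intro y
  cases y
  · have : f ⁻¹' {false} = (f ⁻¹' {true})ᶜ := by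
      ext x; cases hx : f x <;> simp [hx]
    rw [this]; exact h.compl
  · exact h

lemma measurable_phiT_coord (V : ℕ → Set (Icc (0:ℝ) 1)) (k : ℕ) :
    Measurable fun T : List ℕ → Bool => phiT V T k := by
  apply measurable_of_bool
  have : (fun T : List ℕ → Bool => phiT V T k) ⁻¹' {true}
      = ⋃ (s : List ℕ), {T : List ℕ → Bool | pt s ∈ V k ∧ T s = true} := by
    ext T
    simp only [Set.mem_preimage, Set.mem_singleton_iff, phiT, decide_eq_true_eq,
      Set.mem_iUnion, Set.mem_setOf_eq]
    tauto
  rw [this]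
  apply MeasurableSet.iUnion
  intro t
  by_cases ht : pt t ∈ V k
  · simp only [ht, true_and]
    exact measurableSet_boolSet (measurable_pi_apply t)
  · have : {T : List ℕ → Bool | pt t ∈ V k ∧ T t = true} = ∅ := by ext T; simp [ht]
    rw [this]; exact MeasurableSet.empty

lemma measurableSet_isTree :
    MeasurableSet {q : (List ℕ → Bool) × (ℕ → ℕ) | IsTreeB q.1} := by
  have : {q : (List ℕ → Bool) × (ℕ → ℕ) | IsTreeB q.1}
      = ⋂ (s : List ℕ) (a : ℕ),
          ({q : (List ℕ → Bool) × (ℕ → ℕ) | q.1 (s ++ [a]) = true}ᶜ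
            ∪ {q | q.1 s = true}) := by
    ext q
    simp only [Set.mem_setOf_eq, Set.mem_iInter, IsTreeB, Set.mem_union, Set.mem_compl_iff]
    constructor
    · intro h s a
      by_cases hb : q.1 (s ++ [a]) = true
      · right; exact h s a hb
      · left; exact hb
    · intro h s a hsa
      rcases h s a with h' | h'
      · exact absurd hsa h'
      · exact h'
  rw [this]
  refine MeasurableSet.iInter fun s => MeasurableSet.iInter fun a => MeasurableSet.union ?_ ?_
  · exact (measurableSet_boolSet ((measurable_pi_apply (s ++ [a])).comp measurable_fst)).compl
  · exact measurableSet_boolSet ((measurable_pi_apply s).comp measurable_fst)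

/-- If the well-founded trees are characterized by an analytic condition, the set of
well-founded trees is analytic. -/
lemma wf_trees_analytic (V : ℕ → Set (Icc (0:ℝ) 1)) (S : Set (ℕ → Bool))
    (hSA : AnalyticSet S)
    (hchar : ∀ T : List ℕ → Bool, IsTreeB T → (phiT V T ∈ S ↔ ¬ Ill T)) :
    AnalyticSet {T : List ℕ → Bool | IsTreeB T ∧ ¬ Ill T} := by
  have hT0 : IsTreeB (fun _ => false) ∧ ¬ Ill (fun _ => false) := by
    constructor
    · intro s a h; simp at h
    · rintro ⟨σ, hb⟩
      have := hb 0
      simp at this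
  rw [AnalyticSet_def] at hSA
  rcases hSA with rfl | ⟨g, gcont, grange⟩
  · exact absurd ((hchar _ hT0.1).2 hT0.2) (by simp)
  · set M : Set ((List ℕ → Bool) × (ℕ → ℕ)) :=
      {q | IsTreeB q.1 ∧ g q.2 = phiT V q.1} with hM
    have hMm : MeasurableSet M := by
      have hsplit : M = {q : (List ℕ → Bool) × (ℕ → ℕ) | IsTreeB q.1}
          ∩ {q | g q.2 = phiT V q.1} := rfl
      rw [hsplit]
      apply measurableSet_isTree.inter
      have : {q : (List ℕ → Bool) × (ℕ → ℕ) | g q.2 = phiT V q.1}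
          = ⋂ k, {q : (List ℕ → Bool) × (ℕ → ℕ) | g q.2 k = phiT V q.1 k} := by
        ext q
        simp only [Set.mem_setOf_eq, Set.mem_iInter]
        exact ⟨fun h k => by rw [h], fun h => funext h⟩
      rw [this]
      refine MeasurableSet.iInter fun k => measurableSet_eqBool ?_ ?_
      · exact (measurable_pi_apply k).comp (gcont.measurable.comp measurable_snd)
      · exact (measurable_phiT_coord V k).comp measurable_fst
    have himg : {T : List ℕ → Bool | IsTreeB T ∧ ¬ Ill T} = Prod.fst '' M := by
      ext T
      simp only [Set.mem_setOf_eq, Set.mem_image, hM, Prod.exists]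
      constructor
      · rintro ⟨h1, h2⟩
        have : phiT V T ∈ S := (hchar T h1).2 h2
        rw [← grange] at this
        obtain ⟨σ, hσ⟩ := this
        exact ⟨T, σ, ⟨h1, hσ⟩, rfl⟩
      · rintro ⟨T', σ, ⟨h1, h2⟩, rfl⟩
        refine ⟨h1, (hchar _ h1).1 ?_⟩
        rw [← grange]
        exact ⟨σ, h2⟩
    rw [himg]
    have : PolishSpace (List ℕ → Bool) := @instPolishSpaceOfSeparableSpaceOfIsCompletelyMetrizableSpace _ _ inferInstance inferInstance
    exact hMm.analyticSet.image_of_continuous continuous_fst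


/-! ### A universal analytic set on Cantor space -/

lemma analyticSet_univ_cantor : AnalyticSet (Set.univ : Set (ℕ → Bool)) := by
  have hcont : Continuous (fun σ : ℕ → ℕ => (fun n => decide (σ n = 0) : ℕ → Bool)) := by
    apply continuous_pi
    intro n
    exact Continuous.comp (continuous_of_discreteTopology
      (f := fun m : ℕ => decide (m = 0))) (continuous_apply n)
  have hsurj : Set.range (fun σ : ℕ → ℕ => (fun n => decide (σ n = 0) : ℕ → Bool))
      = Set.univ := by
    apply Set.eq_univ_of_forall
    intro x
    refine ⟨fun n => if x n = true then 0 else 1, ?_⟩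
    funext n
    cases hx : x n <;> simp [hx]
  rw [← hsurj]
  exact analyticSet_range_of_polishSpace hcont

lemma exists_universal :
    ∃ U : Set ((ℕ → Bool) × (ℕ → Bool)),
      AnalyticSet {x : ℕ → Bool | (x, x) ∈ U} ∧
      ∀ A : Set (ℕ → Bool), AnalyticSet A → ∃ y, ∀ x, x ∈ A ↔ (y, x) ∈ U := by
  obtain ⟨W, hWo, hWb⟩ := exists_basis_enum ((ℕ → Bool) × (ℕ → ℕ))
  classical
  set Chat : Set ((ℕ → Bool) × ((ℕ → Bool) × (ℕ → ℕ))) :=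
    {p | ∀ n, p.1 n = true → p.2 ∉ W n} with hChat
  have hCm : MeasurableSet Chat := by
    have : Chat = ⋂ n, ({p : (ℕ → Bool) × ((ℕ → Bool) × (ℕ → ℕ)) | p.1 n = true}ᶜ
        ∪ {p | p.2 ∈ W n}ᶜ) := by
      ext p
      simp only [hChat, Set.mem_setOf_eq, Set.mem_iInter, Set.mem_union, Set.mem_compl_iff]
      constructor
      · intro h n
        by_cases hb : p.1 n = true
        · right; exact h n hb
        · left; exact hb
      · intro h n hn
        rcases h n with h' | h'
        · exact absurd hn h'
        · exact h'
    rw [this]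
    refine MeasurableSet.iInter fun n => MeasurableSet.union ?_ ?_
    · exact (measurableSet_boolSet ((measurable_pi_apply n).comp measurable_fst)).compl
    · exact (((hWo n).measurableSet).preimage measurable_snd).compl
  set U : Set ((ℕ → Bool) × (ℕ → Bool)) :=
    (fun p : (ℕ → Bool) × ((ℕ → Bool) × (ℕ → ℕ)) => (p.1, p.2.1)) '' Chat with hU
  have hmemU : ∀ y x, (y, x) ∈ U ↔ ∃ σ, (y, (x, σ)) ∈ Chat := by
    intro y x
    constructor
    · rintro ⟨⟨y', x', σ⟩, hp, hpe⟩
      simp only [Prod.mk.injEq] at hpe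
      obtain ⟨rfl, rfl⟩ := hpe
      exact ⟨σ, hp⟩
    · rintro ⟨σ, hσ⟩
      exact ⟨(y, (x, σ)), hσ, rfl⟩
  -- every closed subset of (ℕ → Bool) × (ℕ → ℕ) is coded by some y
  have hclosed : ∀ C : Set ((ℕ → Bool) × (ℕ → ℕ)), IsClosed C →
      ∃ y : ℕ → Bool, ∀ z, z ∈ C ↔ ∀ n, y n = true → z ∉ W n := by
    intro C hC
    refine ⟨fun n => decide (W n ⊆ Cᶜ), fun z => ⟨?_, ?_⟩⟩
    · intro hz n hn hzW
      exact (of_decide_eq_true hn) hzW hz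
    · intro h
      by_contra hz
      obtain ⟨n, hzW, hsub⟩ := hWb Cᶜ hC.isOpen_compl z hz
      exact h n (decide_eq_true (p := W n ⊆ Cᶜ) hsub) hzW
  refine ⟨U, ?_, ?_⟩
  · -- the diagonal section is analytic
    set M2 : Set ((ℕ → Bool) × (ℕ → ℕ)) := {w | (w.1, (w.1, w.2)) ∈ Chat} with hM2
    have hM2m : MeasurableSet M2 :=
      hCm.preimage (Continuous.measurable (by fun_prop))
    have him : {x : ℕ → Bool | (x, x) ∈ U} = Prod.fst '' M2 := by
      ext x
      simp only [Set.mem_setOf_eq, hmemU, Set.mem_image, hM2, Prod.exists]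
      constructor
      · rintro ⟨σ, hσ⟩
        exact ⟨x, σ, hσ, rfl⟩
      · rintro ⟨x', σ, h, rfl⟩
        exact ⟨σ, h⟩
    rw [him]
    have : PolishSpace (ℕ → Bool) := @instPolishSpaceOfSeparableSpaceOfIsCompletelyMetrizableSpace _ _ inferInstance inferInstance
    exact hM2m.analyticSet.image_of_continuous continuous_fst
  · intro A hA
    rw [AnalyticSet_def] at hA
    rcases hA with rfl | ⟨h, hcont, hrange⟩
    · obtain ⟨y, hy⟩ := hclosed ∅ isClosed_empty
      refine ⟨y, fun x => ?_⟩
      simp only [Set.mem_empty_iff_false, false_iff, hmemU]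
      rintro ⟨σ, hσ⟩
      exact Set.notMem_empty _ ((hy (x, σ)).2 fun n hn => hσ n hn)
    · obtain ⟨y, hy⟩ := hclosed {z | h z.2 = z.1}
        (isClosed_eq (hcont.comp continuous_snd) continuous_fst)
      refine ⟨y, fun x => ?_⟩
      rw [← hrange]
      constructor
      · rintro ⟨σ, rfl⟩
        exact (hmemU _ _).2 ⟨σ, fun n hn => ((hy (h σ, σ)).1 rfl) n hn⟩
      · intro hx
        obtain ⟨σ, hσ⟩ := (hmemU _ _).1 hx
        exact ⟨σ, (hy (x, σ)).2 (fun n hn => hσ n hn)⟩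

/-! ### Normal form: reduction of a coanalytic set to well-founded trees -/

open Classical in
noncomputable def psiT (h : (ℕ → ℕ) → (ℕ → Bool)) (x : ℕ → Bool) : List ℕ → Bool :=
  fun s => decide (∃ σ : ℕ → ℕ,
    (∀ i : Fin s.length, σ i = s.get i) ∧ (∀ i : Fin s.length, h σ i = x i))

lemma psiT_tree (h : (ℕ → ℕ) → (ℕ → Bool)) (x : ℕ → Bool) : IsTreeB (psiT h x) := by
  intro s a hsa
  simp only [psiT, decide_eq_true_eq] at hsa ⊢
  obtain ⟨σ, h1, h2⟩ := hsa
  refine ⟨σ, fun i => ?_, fun i => ?_⟩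
  · have hi : (i : ℕ) < (s ++ [a]).length := by
      simp only [List.length_append, List.length_singleton]
      omega
    have := h1 ⟨i, hi⟩
    simpa [List.getElem_append_left i.isLt] using this
  · have hi : (i : ℕ) < (s ++ [a]).length := by
      simp only [List.length_append, List.length_singleton]
      omega
    exact h2 ⟨i, hi⟩

lemma psiT_ill_iff {h : (ℕ → ℕ) → (ℕ → Bool)} (hcont : Continuous h) (x : ℕ → Bool) :
    Ill (psiT h x) ↔ x ∈ Set.range h := by
  constructor
  · rintro ⟨τ, hb⟩
    have hwit : ∀ n : ℕ, ∃ σ : ℕ → ℕ, (∀ i : ℕ, i < n → σ i = τ i) ∧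
        (∀ i : ℕ, i < n → h σ i = x i) := by
      intro n
      have := hb n
      simp only [psiT, decide_eq_true_eq] at this
      obtain ⟨σ, h1, h2⟩ := this
      refine ⟨σ, fun i hi => ?_, fun i hi => ?_⟩
      · have hi' : i < (node τ n).length := by rw [node_length]; exact hi
        have := h1 ⟨i, hi'⟩
        simpa [node, List.get_ofFn] using this
      · have hi' : i < (node τ n).length := by rw [node_length]; exact hi
        exact h2 ⟨i, hi'⟩
    choose sq hsq1 hsq2 using hwit
    have htend1 : Filter.Tendsto (fun n => h (sq n)) Filter.atTop (nhds (h τ)) := by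
      apply (hcont.tendsto τ).comp
      rw [tendsto_pi_nhds]
      intro i
      apply tendsto_nhds_of_eventually_eq
      filter_upwards [Filter.eventually_ge_atTop (i+1)] with n hn
      exact hsq1 n i (by omega)
    have htend2 : Filter.Tendsto (fun n => h (sq n)) Filter.atTop (nhds x) := by
      rw [tendsto_pi_nhds]
      intro k
      apply tendsto_nhds_of_eventually_eq
      filter_upwards [Filter.eventually_ge_atTop (k+1)] with n hn
      exact hsq2 n k (by omega)
    exact ⟨τ, tendsto_nhds_unique htend1 htend2⟩
  · rintro ⟨σ₀, rfl⟩
    refine ⟨σ₀, fun n => ?_⟩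
    simp only [psiT, decide_eq_true_eq]
    refine ⟨σ₀, fun i => ?_, fun i => rfl⟩
    show σ₀ ↑i = (List.ofFn fun i : Fin n => σ₀ ↑i).get i
    exact (List.get_ofFn (fun j : Fin n => σ₀ ↑j) i).symm

lemma measurable_psiT_coord (h : (ℕ → ℕ) → (ℕ → Bool)) (s : List ℕ) :
    Measurable fun x : ℕ → Bool => psiT h x s := by
  apply measurable_of_bool
  classical
  set P : (Fin s.length → Bool) → Prop := fun v => ∃ σ : ℕ → ℕ,
    (∀ i : Fin s.length, σ i = s.get i) ∧ (∀ i : Fin s.length, h σ i = v i) with hP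
  have hpre : (fun x : ℕ → Bool => psiT h x s) ⁻¹' {true}
      = ⋃ (v : Fin s.length → Bool) (_ : P v), ⋂ i : Fin s.length, {x | x (i : ℕ) = v i} := by
    ext x
    simp only [Set.mem_preimage, Set.mem_singleton_iff, psiT, decide_eq_true_eq,
      Set.mem_iUnion, Set.mem_iInter, Set.mem_setOf_eq, hP]
    constructor
    · rintro ⟨σ, h1, h2⟩
      exact ⟨fun i => x i, ⟨σ, h1, h2⟩, fun i => rfl⟩
    · rintro ⟨v, ⟨σ, h1, h2⟩, hxv⟩
      exact ⟨σ, h1, fun i => by rw [h2 i, hxv i]⟩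
  rw [hpre]
  refine MeasurableSet.iUnion fun v => MeasurableSet.iUnion fun _ =>
    MeasurableSet.iInter fun i => ?_
  cases hvi : v i
  · have : {x : ℕ → Bool | x (i : ℕ) = false} = {x : ℕ → Bool | x (i : ℕ) = true}ᶜ := by
      ext x; cases hx : x (i : ℕ) <;> simp [hx]
    rw [this]
    exact (measurableSet_boolSet (measurable_pi_apply _)).compl
  · exact measurableSet_boolSet (measurable_pi_apply _)

end HurAux

/-- the Hurewicz theorem. -/
theorem hurewicz_souslin_set_containing_compact_subsets_of_rationals
    (𝓐 : Set {A : Set (Icc (0:ℝ) 1) // IsClosed A})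
    (h𝓐 : IsSouslinIn (effrosSigma (Icc (0:ℝ) 1)) 𝓐)
    (hQ : ∀ A : {A : Set (Icc (0:ℝ) 1) // IsClosed A},
      IsCompact (A : Set (Icc (0:ℝ) 1)) →
      (∀ x ∈ (A : Set (Icc (0:ℝ) 1)), ¬ Irrational (x : ℝ)) → A ∈ 𝓐) :
    ∃ A ∈ 𝓐, ∃ x ∈ (A : Set (Icc (0:ℝ) 1)), Irrational (x : ℝ) := by
  by_contra hcon
  push_neg at hcon
  obtain ⟨V, hVo, hVb⟩ := HurAux.exists_basis_enum (Icc (0:ℝ) 1)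
  obtain ⟨S, hSA, hSrep⟩ := HurAux.souslin_preimage V hVb h𝓐
  have hchar : ∀ T, HurAux.IsTreeB T → (HurAux.phiT V T ∈ S ↔ ¬ HurAux.Ill T) := by
    intro T hT
    have hmem : HurAux.KT T ∈ 𝓐 ↔ HurAux.phiT V T ∈ S := by
      rw [hSrep, Set.mem_preimage, HurAux.eF_KT V hVo T]
    constructor
    · intro hS hIll
      obtain ⟨x, hx, hxirr⟩ := HurAux.ill_irrational hIll
      exact hcon (HurAux.KT T) (hmem.2 hS) x hx hxirr
    · intro hni
      apply hmem.1
      apply hQ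
      · exact (HurAux.KT T).2.isCompact
      · exact HurAux.wf_rational hT hni
  have hW := HurAux.wf_trees_analytic V S hSA hchar
  obtain ⟨U, hUdiagA, hUuniv⟩ := HurAux.exists_universal
  have hDA : AnalyticSet {x : ℕ → Bool | (x, x) ∉ U} := by
    rw [AnalyticSet_def] at hUdiagA hW
    rcases hUdiagA with hE | ⟨hu, hucont, hurange⟩
    · have : {x : ℕ → Bool | (x, x) ∉ U} = Set.univ := by
        apply Set.eq_univ_of_forall
        intro x hx
        have : x ∈ ({x : ℕ → Bool | (x, x) ∈ U}) := hx
        rw [hE] at this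
        exact this
      rw [this]
      exact HurAux.analyticSet_univ_cantor
    · rcases hW with hWE | ⟨gW, gWcont, gWrange⟩
      · exfalso
        have hT0 : (fun _ : List ℕ => false) ∈
            {T : List ℕ → Bool | HurAux.IsTreeB T ∧ ¬ HurAux.Ill T} := by
          constructor
          · intro s a h; simp at h
          · rintro ⟨σ, hb⟩
            have := hb 0
            simp at this
        rw [hWE] at hT0
        exact hT0
      · set M3 : Set ((ℕ → Bool) × (ℕ → ℕ)) :=
          {w | gW w.2 = HurAux.psiT hu w.1} with hM3
        have hM3m : MeasurableSet M3 := by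
          have : M3 = ⋂ s : List ℕ,
              {w : (ℕ → Bool) × (ℕ → ℕ) | gW w.2 s = HurAux.psiT hu w.1 s} := by
            ext w
            simp only [hM3, Set.mem_setOf_eq, Set.mem_iInter]
            exact ⟨fun h s => by rw [h], fun h => funext h⟩
          rw [this]
          refine MeasurableSet.iInter fun s => HurAux.measurableSet_eqBool ?_ ?_
          · exact (measurable_pi_apply s).comp (gWcont.measurable.comp measurable_snd)
          · exact (HurAux.measurable_psiT_coord hu s).comp measurable_fst
        have himg : {x : ℕ → Bool | (x, x) ∉ U} = Prod.fst '' M3 := by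
          ext x
          have hxiff : (x, x) ∉ U ↔ ¬ HurAux.Ill (HurAux.psiT hu x) := by
            rw [HurAux.psiT_ill_iff hucont, hurange]
            constructor
            · intro h hx
              exact h hx
            · intro h hx
              exact h hx
          simp only [Set.mem_setOf_eq, Set.mem_image, hM3, Prod.exists]
          constructor
          · intro hx
            have : HurAux.psiT hu x ∈ {T : List ℕ → Bool | HurAux.IsTreeB T ∧ ¬ HurAux.Ill T} :=
              ⟨HurAux.psiT_tree hu x, hxiff.1 hx⟩
            rw [← gWrange] at this
            obtain ⟨σ, hσ⟩ := this
            exact ⟨x, σ, hσ, rfl⟩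
          · rintro ⟨x', σ, hσ, rfl⟩
            apply hxiff.2
            have : HurAux.psiT hu x' ∈ Set.range gW := ⟨σ, hσ⟩
            rw [gWrange] at this
            exact this.2
        rw [himg]
        have : PolishSpace (ℕ → Bool) := @instPolishSpaceOfSeparableSpaceOfIsCompletelyMetrizableSpace _ _ inferInstance inferInstance
        exact hM3m.analyticSet.image_of_continuous continuous_fst
  obtain ⟨y, hy⟩ := hUuniv _ hDA
  exact iff_not_self (hy y).symm
end

section
/- Let (E, e) and (M, d) be complete separable metric spaces and set 𝓗 = {T ∈ F(E × M) : for every (x₁, y₁), (x₂, y₂) ∈ T, e(x₁, x₂) = d(y₁, y₂)}. Then 𝓗 belongs to 𝓑_{F(E × M)}; for each T ∈ 𝓗 the projection π(T) of T onto E is a closed subset of E; the map π : 𝓗 → F(E) is measurable with respect to the Effros Borel structures; and consequently π(𝓗) is Souslin in the Effros Borel space (F(E), 𝓑_{F(E)}). -/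
open Set Topology TopologicalSpace MeasureTheory

/-- `𝓗`: the closed subsets of `E × M` that are graphs of partial isometries. -/
def isomGraphs (E M : Type*) [MetricSpace E] [MetricSpace M] :
    Set {A : Set (E × M) // IsClosed A} :=
  {T | ∀ p ∈ (T : Set (E × M)), ∀ q ∈ (T : Set (E × M)), dist p.1 q.1 = dist p.2 q.2}

/-- `π(T)`: the projection of `T ⊆ E × M` onto `E` (written via its closure so that
it is always a closed set; on `𝓗` the projection is itself closed). -/
noncomputable def projE (E M : Type*) [MetricSpace E] [MetricSpace M]
    (T : {A : Set (E × M) // IsClosed A}) : {A : Set E // IsClosed A} :=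
  ⟨closure (Prod.fst '' (T : Set (E × M))), isClosed_closure⟩


set_option linter.unusedSectionVars false
namespace Stmt11
attribute [local instance] Classical.propDecidable

abbrev FF (X : Type*) [TopologicalSpace X] := {A : Set X // IsClosed A}

section Helpers

variable {X : Type*} [TopologicalSpace X]

lemma hit_meas {U : Set X} (hU : IsOpen U) :
    MeasurableSet[effrosSigma X] {A : FF X | ((A : Set X) ∩ U).Nonempty} :=
  MeasurableSpace.measurableSet_generateFrom ⟨U, hU, rfl⟩

lemma nonempty_meas [SecondCountableTopology X] :
    MeasurableSet[effrosSigma X] {A : FF X | (A : Set X).Nonempty} := by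
  obtain ⟨b, hbc, -, hb⟩ := exists_countable_basis X
  have h : {A : FF X | (A : Set X).Nonempty} =
      ⋃ U ∈ b, {A : FF X | ((A : Set X) ∩ U).Nonempty} := by
    ext A
    simp only [mem_setOf_eq, mem_iUnion]
    constructor
    · rintro ⟨x, hx⟩
      obtain ⟨U, hUb, hxU, -⟩ := hb.exists_subset_of_mem_open (mem_univ x) isOpen_univ
      exact ⟨U, hUb, x, hx, hxU⟩
    · rintro ⟨U, -, x, hx, -⟩
      exact ⟨x, hx⟩
  rw [h]
  exact .biUnion hbc fun U hUb => hit_meas (hb.isOpen hUb)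

lemma empty_meas [SecondCountableTopology X] :
    MeasurableSet[effrosSigma X] {A : FF X | (A : Set X) = ∅} := by
  have h : {A : FF X | (A : Set X) = ∅} = {A : FF X | (A : Set X).Nonempty}ᶜ := by
    ext A; simp [Set.not_nonempty_iff_eq_empty]
  rw [h]
  exact nonempty_meas.compl

lemma closure_inter_open_nonempty {S U : Set X} (hU : IsOpen U) :
    (closure S ∩ U).Nonempty ↔ (S ∩ U).Nonempty := by
  constructor
  · rintro ⟨x, hxc, hxU⟩
    have hx : x ∈ closure (U ∩ S) := hU.inter_closure ⟨hxU, hxc⟩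
    obtain ⟨y, hyU, hyS⟩ := closure_nonempty_iff.1 ⟨x, hx⟩
    exact ⟨y, hyS, hyU⟩
  · rintro ⟨x, hxS, hxU⟩
    exact ⟨x, subset_closure hxS, hxU⟩

end Helpers

section Parts123

variable {E M : Type*} [MetricSpace E] [MetricSpace M]

/-- Part 2. -/
lemma proj_closed [CompleteSpace M] (T : Set (E × M)) (hT : IsClosed T)
    (hiso : ∀ p ∈ T, ∀ q ∈ T, dist p.1 q.1 = dist p.2 q.2) :
    IsClosed (Prod.fst '' T) := by
  rw [← closure_eq_iff_isClosed]
  refine Subset.antisymm (fun x hx => ?_) subset_closure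
  obtain ⟨xs, hxs, hlim⟩ := mem_closure_iff_seq_limit.1 hx
  choose p hpT hp1 using hxs
  have hc1 : CauchySeq xs := hlim.cauchySeq
  have hc2 : CauchySeq fun n => (p n).2 := by
    rw [Metric.cauchySeq_iff] at hc1 ⊢
    intro ε hε
    obtain ⟨N, hN⟩ := hc1 ε hε
    refine ⟨N, fun m hm n hn => ?_⟩
    rw [← hiso _ (hpT m) _ (hpT n)]
    simpa only [hp1] using hN m hm n hn
  obtain ⟨y, hy⟩ := cauchySeq_tendsto_of_complete hc2
  have hpl : Filter.Tendsto p Filter.atTop (nhds (x, y)) := by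
    have := hlim.prodMk_nhds hy
    simpa only [← hp1] using this
  exact ⟨(x, y), hT.mem_of_tendsto hpl (Filter.Eventually.of_forall hpT), rfl⟩

/-- Part 1. -/
lemma isomGraphs_meas [SeparableSpace E] [SeparableSpace M] :
    MeasurableSet[effrosSigma (E × M)] (isomGraphs E M) := by
  haveI : SecondCountableTopology E := UniformSpace.secondCountable_of_separable E
  haveI : SecondCountableTopology M := UniformSpace.secondCountable_of_separable M
  obtain ⟨b, hbc, -, hb⟩ := exists_countable_basis (E × M)
  set W : Set ((E × M) × (E × M)) := {pq | dist pq.1.1 pq.2.1 ≠ dist pq.1.2 pq.2.2} with hW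
  have hWo : IsOpen W := by
    have : IsClosed {pq : (E × M) × (E × M) | dist pq.1.1 pq.2.1 = dist pq.1.2 pq.2.2} :=
      isClosed_eq (by fun_prop) (by fun_prop)
    exact isOpen_compl_iff.2 this
  have key : (isomGraphs E M)ᶜ =
      ⋃ uv ∈ {uv : Set (E × M) × Set (E × M) | uv.1 ∈ b ∧ uv.2 ∈ b ∧ uv.1 ×ˢ uv.2 ⊆ W},
        ({T : FF (E × M) | ((T : Set (E × M)) ∩ uv.1).Nonempty} ∩
         {T : FF (E × M) | ((T : Set (E × M)) ∩ uv.2).Nonempty}) := by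
    ext T
    simp only [mem_compl_iff, isomGraphs, mem_setOf_eq, mem_iUnion, mem_inter_iff]
    constructor
    · intro h
      push_neg at h
      obtain ⟨p, hp, q, hq, hne⟩ := h
      have hpq : (p, q) ∈ W := hne
      obtain ⟨pb, hpb, hpqpb, hsub⟩ := (hb.prod hb).exists_subset_of_mem_open hpq hWo
      obtain ⟨u, hu, v, hv, rfl⟩ := hpb
      exact ⟨(u, v), ⟨hu, hv, hsub⟩, ⟨p, hp, hpqpb.1⟩, ⟨q, hq, hpqpb.2⟩⟩
    · rintro ⟨⟨u, v⟩, ⟨hu, hv, hsub⟩, ⟨p, hpT, hpu⟩, ⟨q, hqT, hqv⟩⟩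
      intro hisoT
      exact hsub (mk_mem_prod hpu hqv) (hisoT p hpT q hqT)
  have h1 : MeasurableSet[effrosSigma (E × M)]
      (⋃ uv ∈ {uv : Set (E × M) × Set (E × M) | uv.1 ∈ b ∧ uv.2 ∈ b ∧ uv.1 ×ˢ uv.2 ⊆ W},
        ({T : FF (E × M) | ((T : Set (E × M)) ∩ uv.1).Nonempty} ∩
         {T : FF (E × M) | ((T : Set (E × M)) ∩ uv.2).Nonempty})) :=
    MeasurableSet.biUnion ((hbc.prod hbc).mono fun uv huv => mk_mem_prod huv.1 huv.2.1)
      fun uv huv => (hit_meas (hb.isOpen huv.1)).inter (hit_meas (hb.isOpen huv.2.1))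
  have h2 : MeasurableSet[effrosSigma (E × M)] ((isomGraphs E M)ᶜ) := h1.congr key.symm
  simpa using h2.compl

/-- Part 3. -/
lemma projE_meas :
    @Measurable _ _ (effrosSigma (E × M)) (effrosSigma E) (projE E M) := by
  have key : ∀ t ∈ {𝓤 : Set (FF E) |
      ∃ U : Set E, IsOpen U ∧ 𝓤 = {A : FF E | ((A : Set E) ∩ U).Nonempty}},
      MeasurableSet[effrosSigma (E × M)] (projE E M ⁻¹' t) := by
    rintro t ⟨U, hU, rfl⟩
    have h : projE E M ⁻¹' {A : FF E | ((A : Set E) ∩ U).Nonempty} =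
        {T : FF (E × M) | ((T : Set (E × M)) ∩ U ×ˢ (univ : Set M)).Nonempty} := by
      ext T
      simp only [mem_preimage, projE, mem_setOf_eq]
      rw [closure_inter_open_nonempty hU]
      constructor
      · rintro ⟨x, ⟨p, hpT, rfl⟩, hxU⟩
        exact ⟨p, hpT, hxU, mem_univ _⟩
      · rintro ⟨p, hpT, hpU, -⟩
        exact ⟨p.1, ⟨p, hpT, rfl⟩, hpU⟩
    exact (hit_meas (X := E × M) (hU.prod isOpen_univ)).congr h.symm
  exact @measurable_generateFrom _ _ (effrosSigma (E × M)) _ _ key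

end Parts123

section Selector

variable {E : Type*} [MetricSpace E] [CompleteSpace E] (u : ℕ → E)

/-- Auxiliary decreasing sequence of open sets used to define a measurable selector. -/
noncomputable def SS (A : Set E) : ℕ → Set E
  | 0 => univ
  | n + 1 => SS A n ∩
      Metric.ball (u (sInf {k | (A ∩ (SS A n ∩ Metric.ball (u k) ((1/2 : ℝ) ^ n))).Nonempty}))
        ((1/2 : ℝ) ^ n)

/-- The index chosen at stage `n`. -/
noncomputable def KK (A : Set E) (n : ℕ) : ℕ :=
  sInf {k | (A ∩ (SS u A n ∩ Metric.ball (u k) ((1/2 : ℝ) ^ n))).Nonempty}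

lemma SS_succ (A : Set E) (n : ℕ) :
    SS u A (n + 1) = SS u A n ∩ Metric.ball (u (KK u A n)) ((1/2 : ℝ) ^ n) := rfl

lemma SS_antitone (A : Set E) : ∀ {m n : ℕ}, m ≤ n → SS u A n ⊆ SS u A m := by
  intro m n h
  induction n with
  | zero => simp_all
  | succ n ih =>
    rcases Nat.lt_or_ge m (n+1) with h' | h'
    · exact (inter_subset_left).trans (ih (Nat.lt_succ_iff.1 h'))
    · have : m = n + 1 := le_antisymm h h'
      subst this; rfl

lemma SS_nonempty (hu : DenseRange u) {A : Set E} (hA : A.Nonempty) :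
    ∀ n, (A ∩ SS u A n).Nonempty := by
  intro n
  induction n with
  | zero => simpa [SS] using hA
  | succ n ih =>
    obtain ⟨x, hxA, hxS⟩ := ih
    obtain ⟨k, hk⟩ := Metric.denseRange_iff.1 hu x ((1/2 : ℝ) ^ n) (by positivity)
    have hne : {k | (A ∩ (SS u A n ∩ Metric.ball (u k) ((1/2 : ℝ) ^ n))).Nonempty}.Nonempty :=
      ⟨k, x, hxA, hxS, Metric.mem_ball.2 hk⟩
    obtain ⟨y, hyA, hyS, hyB⟩ := Nat.sInf_mem hne
    exact ⟨y, hyA, hyS, hyB⟩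

lemma subset_ball_of_mem_SS (A : Set E) (n : ℕ) :
    A ∩ SS u A (n + 1) ⊆ Metric.ball (u (KK u A n)) ((1/2 : ℝ) ^ n) := by
  rw [SS_succ]
  exact fun x hx => hx.2.2

lemma cauchy_of_pow {X : Type*} [PseudoMetricSpace X] (c : ℕ → X)
    (h : ∀ m n, dist (c m) (c n) ≤ (1/2 : ℝ) ^ m + (1/2 : ℝ) ^ n) : CauchySeq c := by
  rw [Metric.cauchySeq_iff']
  intro ε hε
  obtain ⟨N, hN⟩ := exists_pow_lt_of_lt_one (show (0:ℝ) < ε/2 by linarith) (by norm_num : (1/2:ℝ) < 1)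
  refine ⟨N, fun n hn => lt_of_le_of_lt (h n N) ?_⟩
  have h1 : (1/2 : ℝ) ^ n ≤ (1/2 : ℝ) ^ N := pow_le_pow_of_le_one (by norm_num) (by norm_num) hn
  linarith

lemma KK_cauchy (hu : DenseRange u) {A : Set E} (hA : A.Nonempty) :
    CauchySeq fun n => u (KK u A n) := by
  apply cauchy_of_pow
  intro m n
  wlog h : n ≤ m generalizing m n
  · rw [dist_comm]; linarith [this n m (le_of_not_ge h)]
  obtain ⟨a, haA, haS⟩ := SS_nonempty u hu hA (m + 1)
  have ham : a ∈ Metric.ball (u (KK u A m)) ((1/2 : ℝ) ^ m) :=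
    subset_ball_of_mem_SS u A m ⟨haA, haS⟩
  have han : a ∈ Metric.ball (u (KK u A n)) ((1/2 : ℝ) ^ n) :=
    subset_ball_of_mem_SS u A n ⟨haA, SS_antitone u A (Nat.succ_le_succ h) haS⟩
  have h1 := Metric.mem_ball.1 ham
  have h2 := Metric.mem_ball.1 han
  have htr := dist_triangle (u (KK u A m)) a (u (KK u A n))
  rw [dist_comm (u (KK u A m)) a] at htr
  linarith

/-- The measurable selector. -/
noncomputable def sel (A : Set E) : E :=
  @Filter.limUnder _ _ _ ⟨u 0⟩ Filter.atTop fun n => u (KK u A n)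

lemma KK_empty (n : ℕ) : KK u (∅ : Set E) n = 0 := by
  simp [KK]

lemma sel_tendsto (hu : DenseRange u) {A : Set E} (hA : IsClosed A) :
    Filter.Tendsto (fun n => u (KK u A n)) Filter.atTop (nhds (sel u A)) := by
  haveI : Nonempty E := ⟨u 0⟩
  rcases eq_empty_or_nonempty A with rfl | hne
  · have hconst : (fun n => u (KK u (∅ : Set E) n)) = fun _ => u 0 := by
      funext n; rw [KK_empty]
    rw [hconst]
    have h0 : Filter.Tendsto (fun _ : ℕ => u 0) Filter.atTop (nhds (u 0)) := tendsto_const_nhds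
    rwa [sel, hconst, h0.limUnder_eq]
  · obtain ⟨x, hx⟩ := cauchySeq_tendsto_of_complete (KK_cauchy u hu hne)
    rwa [sel, hx.limUnder_eq]

lemma sel_mem (hu : DenseRange u) {A : Set E} (hA : IsClosed A) (hne : A.Nonempty) :
    sel u A ∈ A := by
  have hlim := sel_tendsto u hu hA
  -- pick points of A close to the centers
  have hpts : ∀ n, ∃ a ∈ A, dist a (u (KK u A n)) < (1/2 : ℝ) ^ n := by
    intro n
    obtain ⟨a, haA, haS⟩ := SS_nonempty u hu hne (n + 1)
    exact ⟨a, haA, Metric.mem_ball.1 (subset_ball_of_mem_SS u A n ⟨haA, haS⟩)⟩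
  choose a haA had using hpts
  have hda : Filter.Tendsto (fun n => dist (a n) (u (KK u A n))) Filter.atTop (nhds 0) :=
    squeeze_zero (fun n => dist_nonneg) (fun n => (had n).le)
      (tendsto_pow_atTop_nhds_zero_of_lt_one (by norm_num) (by norm_num))
  have ha : Filter.Tendsto a Filter.atTop (nhds (sel u A)) := by
    rw [tendsto_iff_dist_tendsto_zero]
    have hb : ∀ n, dist (a n) (sel u A) ≤
        dist (a n) (u (KK u A n)) + dist (u (KK u A n)) (sel u A) :=
      fun n => dist_triangle _ _ _
    have h2 : Filter.Tendsto (fun n => dist (u (KK u A n)) (sel u A)) Filter.atTop (nhds 0) :=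
      tendsto_iff_dist_tendsto_zero.1 hlim
    have hsum : Filter.Tendsto
        (fun n => dist (a n) (u (KK u A n)) + dist (u (KK u A n)) (sel u A))
        Filter.atTop (nhds 0) := by
      simpa using hda.add h2
    exact squeeze_zero (fun n => dist_nonneg) hb hsum
  exact hA.mem_of_tendsto ha (Filter.Eventually.of_forall haA)

end Selector

section SelectorMeas

lemma nat_sInf_eq (S : Set ℕ) (k : ℕ) :
    sInf S = k ↔ ((k ∈ S ∧ ∀ j < k, j ∉ S) ∨ (S = ∅ ∧ k = 0)) := by
  constructor
  · rintro rfl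
    rcases S.eq_empty_or_nonempty with rfl | h
    · exact Or.inr ⟨rfl, Nat.sInf_empty⟩
    · exact Or.inl ⟨Nat.sInf_mem h, fun j hj => Nat.notMem_of_lt_sInf hj⟩
  · rintro (⟨hk, hmin⟩ | ⟨rfl, rfl⟩)
    · refine le_antisymm (Nat.sInf_le hk) ?_
      by_contra hlt
      push_neg at hlt
      exact hmin _ hlt (Nat.sInf_mem ⟨k, hk⟩)
    · exact Nat.sInf_empty

variable {E : Type*} [MetricSpace E]

lemma measurable_sInf_hit (O : ℕ → Set E) (hO : ∀ k, IsOpen (O k)) :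
    @Measurable _ _ (effrosSigma E) _
      (fun A : FF E => sInf {k | ((A : Set E) ∩ O k).Nonempty}) := by
  refine @measurable_to_countable ℕ (FF E) _ _ (effrosSigma E) _ ?_
  intro A
  set k := sInf {k | ((A : Set E) ∩ O k).Nonempty} with hk
  have hfib : (fun A : FF E => sInf {k | ((A : Set E) ∩ O k).Nonempty}) ⁻¹' {k} =
      (({B : FF E | ((B : Set E) ∩ O k).Nonempty} ∩
        ⋂ j, if j < k then {B : FF E | ((B : Set E) ∩ O j).Nonempty}ᶜ else univ) ∪
       ((⋂ j, {B : FF E | ((B : Set E) ∩ O j).Nonempty}ᶜ) ∩ (if k = 0 then univ else ∅))) := by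
    ext B
    simp only [mem_preimage, mem_singleton_iff, mem_union, mem_inter_iff, mem_iInter,
      mem_compl_iff, mem_setOf_eq]
    rw [nat_sInf_eq]
    constructor
    · rintro (⟨h1, h2⟩ | ⟨h1, h2⟩)
      · refine Or.inl ⟨h1, fun j => ?_⟩
        split_ifs with hj
        · exact h2 j hj
        · trivial
      · refine Or.inr ⟨fun j => ?_, by simp [h2]⟩
        intro hj
        exact absurd h1 (by rw [eq_empty_iff_forall_notMem] at h1 ⊢; exact fun hc => h1 j hj)
    · rintro (⟨h1, h2⟩ | ⟨h1, h2⟩)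
      · refine Or.inl ⟨h1, fun j hj => by simpa [hj] using h2 j⟩
      · right
        constructor
        · rw [eq_empty_iff_forall_notMem]; exact fun j hj => h1 j hj
        · by_contra hk0
          simp [hk0] at h2
  rw [hfib]
  have hg : ∀ j, MeasurableSet[effrosSigma E]
      (if j < k then {B : FF E | ((B : Set E) ∩ O j).Nonempty}ᶜ else univ) := by
    intro j
    split_ifs
    · exact (hit_meas (hO j)).compl
    · exact @MeasurableSet.univ _ (effrosSigma E)
  refine MeasurableSet.union ((hit_meas (hO k)).inter (MeasurableSet.iInter hg)) ?_
  refine MeasurableSet.inter (MeasurableSet.iInter fun j => (hit_meas (hO j)).compl) ?_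
  split_ifs
  · exact @MeasurableSet.univ _ (effrosSigma E)
  · exact @MeasurableSet.empty _ (effrosSigma E)

lemma measurable_piece {α β ι : Type*} [MeasurableSpace α] [MeasurableSpace β] [Countable ι]
    (t : α → ι) (ht : ∀ i, MeasurableSet {a | t a = i}) (g : ι → α → β)
    (hg : ∀ i, Measurable (g i)) : Measurable fun a => g (t a) a := by
  intro s hs
  have h : (fun a => g (t a) a) ⁻¹' s = ⋃ i, ({a | t a = i} ∩ g i ⁻¹' s) := by
    ext a
    simp only [mem_preimage, mem_iUnion, mem_inter_iff, mem_setOf_eq]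
    exact ⟨fun h => ⟨t a, rfl, h⟩, by rintro ⟨i, rfl, h⟩; exact h⟩
  rw [h]
  exact MeasurableSet.iUnion fun i => (ht i).inter (hg i hs)

variable [CompleteSpace E] (u : ℕ → E)

lemma SS_eq (A : Set E) :
    ∀ n, SS u A n = ⋂ j : Fin n, Metric.ball (u (KK u A j)) ((1/2 : ℝ) ^ (j : ℕ)) := by
  intro n
  induction n with
  | zero => simp [SS]
  | succ n ih =>
    rw [SS_succ, ih]
    ext x
    simp only [mem_inter_iff, mem_iInter]
    constructor
    · rintro ⟨h1, h2⟩ j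
      rcases Nat.lt_or_ge (j : ℕ) n with hj | hj
      · simpa using h1 ⟨(j : ℕ), hj⟩
      · have : (j : ℕ) = n := le_antisymm (Nat.lt_succ_iff.1 j.2) hj
        simpa [this] using h2
    · intro h
      exact ⟨fun j => by simpa using h ⟨(j : ℕ), Nat.lt_succ_of_lt j.2⟩,
        by simpa using h ⟨n, Nat.lt_succ_self n⟩⟩

lemma KK_meas : ∀ n, @Measurable _ _ (effrosSigma E) _ (fun A : FF E => KK u (A : Set E) n) := by
  intro n
  induction n using Nat.strong_induction_on with
  | _ n ih =>
    have key : (fun A : FF E => KK u (A : Set E) n) = fun A : FF E =>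
        (fun (v : Fin n → ℕ) (B : FF E) =>
          sInf {k | ((B : Set E) ∩
            ((⋂ j : Fin n, Metric.ball (u (v j)) ((1/2 : ℝ) ^ (j : ℕ))) ∩
              Metric.ball (u k) ((1/2 : ℝ) ^ n))).Nonempty})
        (fun j : Fin n => KK u (A : Set E) j) A := by
      funext A
      have hdef : KK u (A : Set E) n = sInf {k | ((A : Set E) ∩
          (SS u (A : Set E) n ∩ Metric.ball (u k) ((1/2 : ℝ) ^ n))).Nonempty} := rfl
      rw [hdef, SS_eq]
    rw [key]
    refine @measurable_piece (FF E) ℕ (Fin n → ℕ) (effrosSigma E) _ _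
      (fun A : FF E => fun j : Fin n => KK u (A : Set E) j) ?_
      (fun (v : Fin n → ℕ) (B : FF E) =>
        sInf {k | ((B : Set E) ∩
          ((⋂ j : Fin n, Metric.ball (u (v j)) ((1/2 : ℝ) ^ (j : ℕ))) ∩
            Metric.ball (u k) ((1/2 : ℝ) ^ n))).Nonempty}) ?_
    · intro v
      have h : {A : FF E | (fun j : Fin n => KK u (A : Set E) j) = v} =
          ⋂ j : Fin n, {A : FF E | KK u (A : Set E) j = v j} := by
        ext A
        simp [funext_iff]
      rw [h]
      exact MeasurableSet.iInter fun j => (ih j j.2) (measurableSet_singleton (v j))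
    · intro v
      exact measurable_sInf_hit
        (fun k => (⋂ j : Fin n, Metric.ball (u (v j)) ((1/2 : ℝ) ^ (j : ℕ))) ∩
          Metric.ball (u k) ((1/2 : ℝ) ^ n))
        (fun k => (isOpen_iInter_of_finite fun j => Metric.isOpen_ball).inter Metric.isOpen_ball)

lemma sel_meas [MeasurableSpace E] [BorelSpace E] (hu : DenseRange u) :
    @Measurable _ _ (effrosSigma E) _ (fun A : FF E => sel u (A : Set E)) := by
  have hptwise : ∀ A : FF E,
      Filter.Tendsto (fun n => u (KK u (A : Set E) n)) Filter.atTop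
        (nhds (sel u (A : Set E))) := fun A => sel_tendsto u hu A.2
  refine @measurable_of_tendsto_metrizable _ _ (effrosSigma E) _ _ _ _
    (fun n (A : FF E) => u (KK u (A : Set E) n)) (fun A => sel u (A : Set E))
    (fun n => measurable_from_top.comp (KK_meas u n)) ?_
  rw [tendsto_pi_nhds]
  intro A
  exact hptwise A

end SelectorMeas

section DFun

variable {E : Type*} [MetricSpace E] [CompleteSpace E] (u : ℕ → E)

/-- A sequence of measurable selectors whose values are dense in each nonempty closed set. -/
noncomputable def DD (i : ℕ) (A : FF E) : E :=
  if ((A : Set E) ∩ Metric.ball (u (Nat.unpair i).1) ((1/2 : ℝ) ^ (Nat.unpair i).2)).Nonempty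
  then sel u (closure ((A : Set E) ∩ Metric.ball (u (Nat.unpair i).1) ((1/2 : ℝ) ^ (Nat.unpair i).2)))
  else sel u (A : Set E)

lemma DD_mem (hu : DenseRange u) (i : ℕ) (A : FF E) (hne : (A : Set E).Nonempty) :
    DD u i A ∈ (A : Set E) := by
  rw [DD]
  split_ifs with h
  · have h1 : sel u (closure ((A : Set E) ∩ _)) ∈ closure ((A : Set E) ∩
        Metric.ball (u (Nat.unpair i).1) ((1/2 : ℝ) ^ (Nat.unpair i).2)) :=
      sel_mem u hu isClosed_closure (closure_nonempty_iff.2 h)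
    have h2 : closure ((A : Set E) ∩ Metric.ball (u (Nat.unpair i).1)
        ((1/2 : ℝ) ^ (Nat.unpair i).2)) ⊆ (A : Set E) :=
      (closure_mono inter_subset_left).trans A.2.closure_eq.subset
    exact h2 h1
  · exact sel_mem u hu A.2 hne

lemma DD_dense (hu : DenseRange u) (A : FF E) {x : E} (hx : x ∈ (A : Set E))
    {ε : ℝ} (hε : 0 < ε) : ∃ i, dist x (DD u i A) < ε := by
  obtain ⟨m, hm⟩ := exists_pow_lt_of_lt_one (show (0:ℝ) < ε/2 by linarith)
    (by norm_num : (1/2 : ℝ) < 1)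
  obtain ⟨k, hk⟩ := Metric.denseRange_iff.1 hu x ((1/2 : ℝ) ^ m) (by positivity)
  refine ⟨Nat.pair k m, ?_⟩
  have hne : ((A : Set E) ∩ Metric.ball (u k) ((1/2 : ℝ) ^ m)).Nonempty :=
    ⟨x, hx, Metric.mem_ball.2 hk⟩
  have hD : DD u (Nat.pair k m) A = sel u (closure ((A : Set E) ∩
      Metric.ball (u k) ((1/2 : ℝ) ^ m))) := by
    rw [DD, Nat.unpair_pair]
    simp only [hne, if_true]
  have hmem : DD u (Nat.pair k m) A ∈ closure ((A : Set E) ∩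
      Metric.ball (u k) ((1/2 : ℝ) ^ m)) := by
    rw [hD]
    exact sel_mem u hu isClosed_closure (closure_nonempty_iff.2 hne)
  have hball : DD u (Nat.pair k m) A ∈ Metric.closedBall (u k) ((1/2 : ℝ) ^ m) :=
    (Metric.closure_ball_subset_closedBall) ((closure_mono inter_subset_right) hmem)
  have h1 : dist (DD u (Nat.pair k m) A) (u k) ≤ (1/2 : ℝ) ^ m := Metric.mem_closedBall.1 hball
  have h2 := dist_triangle x (u k) (DD u (Nat.pair k m) A)
  rw [dist_comm (u k) (DD u (Nat.pair k m) A)] at h2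
  linarith

lemma cl_meas {B : Set E} (hB : IsOpen B) :
    @Measurable _ _ (effrosSigma E) (effrosSigma E)
      (fun A : FF E => (⟨closure ((A : Set E) ∩ B), isClosed_closure⟩ : FF E)) := by
  have key : ∀ t ∈ {𝓤 : Set (FF E) |
      ∃ U : Set E, IsOpen U ∧ 𝓤 = {A : FF E | ((A : Set E) ∩ U).Nonempty}},
      MeasurableSet[effrosSigma E]
        ((fun A : FF E => (⟨closure ((A : Set E) ∩ B), isClosed_closure⟩ : FF E)) ⁻¹' t) := by
    rintro t ⟨U, hU, rfl⟩
    have h : (fun A : FF E => (⟨closure ((A : Set E) ∩ B), isClosed_closure⟩ : FF E)) ⁻¹'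
        {A : FF E | ((A : Set E) ∩ U).Nonempty} =
        {A : FF E | ((A : Set E) ∩ (B ∩ U)).Nonempty} := by
      ext A
      simp only [mem_preimage, mem_setOf_eq]
      rw [closure_inter_open_nonempty hU, inter_assoc]
    exact (hit_meas (hB.inter hU)).congr h.symm
  exact @measurable_generateFrom _ _ (effrosSigma E) _ _ key

lemma DD_meas [MeasurableSpace E] [BorelSpace E] (hu : DenseRange u) (i : ℕ) :
    @Measurable _ _ (effrosSigma E) _ (DD u i) := by
  have h1 := (sel_meas u hu).comp
      (cl_meas (B := Metric.ball (u (Nat.unpair i).1) ((1/2 : ℝ) ^ (Nat.unpair i).2))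
        (Metric.isOpen_ball (x := u (Nat.unpair i).1) (ε := (1/2 : ℝ) ^ (Nat.unpair i).2)))
  have h2 : @Measurable _ _ (effrosSigma E) _ (fun A : FF E => sel u (A : Set E)) :=
    sel_meas u hu
  have hcond : MeasurableSet[effrosSigma E] {A : FF E | ((A : Set E) ∩
      Metric.ball (u (Nat.unpair i).1) ((1/2 : ℝ) ^ (Nat.unpair i).2)).Nonempty} :=
    hit_meas Metric.isOpen_ball
  have hDD : DD u i = fun A : FF E =>
      if ((A : Set E) ∩ Metric.ball (u (Nat.unpair i).1)
          ((1/2 : ℝ) ^ (Nat.unpair i).2)).Nonempty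
      then sel u (closure ((A : Set E) ∩ Metric.ball (u (Nat.unpair i).1)
          ((1/2 : ℝ) ^ (Nat.unpair i).2)))
      else sel u (A : Set E) := rfl
  rw [hDD]
  exact @Measurable.ite (FF E) E _ _ (effrosSigma E) _ _ (fun _ => Classical.propDecidable _)
    hcond h1 h2

end DFun

section Main

variable {E M : Type*} [MetricSpace E] [CompleteSpace E] [MetricSpace M] [CompleteSpace M]

lemma image_eq (u : ℕ → E) (hu : DenseRange u) :
    projE E M '' isomGraphs E M =
      {A : FF E | (A : Set E) = ∅} ∪
      {A : FF E | (A : Set E).Nonempty ∧ ∃ y : ℕ → M,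
        ∀ i j, dist (y i) (y j) = dist (DD u i A) (DD u j A)} := by
  apply Subset.antisymm
  · rintro A ⟨T, hT, rfl⟩
    by_cases hS : (Prod.fst '' (T : Set (E × M))).Nonempty
    · right
      have hcl : IsClosed (Prod.fst '' (T : Set (E × M))) := proj_closed _ T.2 hT
      have hval : ((projE E M T : FF E) : Set E) = Prod.fst '' (T : Set (E × M)) :=
        hcl.closure_eq
      refine ⟨by rw [hval]; exact hS, ?_⟩
      have hmem : ∀ i, DD u i (projE E M T) ∈ Prod.fst '' (T : Set (E × M)) := by
        intro i
        have := DD_mem u hu i (projE E M T) (by rw [hval]; exact hS)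
        rwa [hval] at this
      simp only [Set.mem_image] at hmem
      choose p hp hp1 using hmem
      refine ⟨fun i => (p i).2, fun i j => ?_⟩
      rw [← hp1 i, ← hp1 j]
      exact (hT (p i) (hp i) (p j) (hp j)).symm
    · left
      show ((projE E M T : FF E) : Set E) = ∅
      have : Prod.fst '' (T : Set (E × M)) = ∅ := not_nonempty_iff_eq_empty.1 hS
      show closure (Prod.fst '' (T : Set (E × M))) = ∅
      rw [this, closure_empty]
  · rintro A (hA | ⟨hne, y, hy⟩)
    · refine ⟨⟨∅, isClosed_empty⟩, fun p hp => absurd hp (notMem_empty p), ?_⟩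
      apply Subtype.ext
      show closure (Prod.fst '' (∅ : Set (E × M))) = (A : Set E)
      rw [image_empty, closure_empty, hA]
    · set g : ℕ → E × M := fun i => (DD u i A, y i) with hg
      refine ⟨⟨closure (range g), isClosed_closure⟩, ?_, ?_⟩
      · intro p hp q hq
        have hP : IsClosed {z : (E × M) × (E × M) | dist z.1.1 z.2.1 = dist z.1.2 z.2.2} :=
          isClosed_eq (by fun_prop) (by fun_prop)
        have hsub : range g ×ˢ range g ⊆
            {z : (E × M) × (E × M) | dist z.1.1 z.2.1 = dist z.1.2 z.2.2} := by
          rintro ⟨p', q'⟩ ⟨⟨i, rfl⟩, ⟨j, rfl⟩⟩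
          exact (hy i j).symm
        have hc : closure (range g) ×ˢ closure (range g) ⊆
            {z : (E × M) × (E × M) | dist z.1.1 z.2.1 = dist z.1.2 z.2.2} := by
          rw [← closure_prod_eq]
          exact closure_minimal hsub hP
        exact hc (mk_mem_prod hp hq)
      · apply Subtype.ext
        show closure (Prod.fst '' closure (range g)) = (A : Set E)
        have hr : Prod.fst '' range g = range fun i => DD u i A := by
          rw [← range_comp]; rfl
        have hDA : closure (range fun i => DD u i A) = (A : Set E) := by
          apply Subset.antisymm
          · exact closure_minimal (range_subset_iff.2 fun i => DD_mem u hu i A hne) A.2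
          · intro x hx
            rw [Metric.mem_closure_iff]
            intro ε hε
            obtain ⟨i, hi⟩ := DD_dense u hu A hx hε
            exact ⟨DD u i A, mem_range_self i, hi⟩
        apply Subset.antisymm
        · calc closure (Prod.fst '' closure (range g))
              ⊆ closure (closure (Prod.fst '' range g)) :=
                closure_mono (image_closure_subset_closure_image continuous_fst)
            _ = closure (Prod.fst '' range g) := closure_closure
            _ = (A : Set E) := by rw [hr, hDA]
        · rw [← hDA, ← hr]
          exact closure_mono (image_mono (f := Prod.fst) subset_closure)

/-- The Souslin scheme. -/
def scheme (u : ℕ → E) (v : ℕ → M) (s : List ℕ) : Set (FF E) :=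
  {A : FF E | (A : Set E) = ∅} ∪
  ({A : FF E | (A : Set E).Nonempty} ∩
    ⋂ (p : ℕ) (q : ℕ),
      {A : FF E | p < s.length → q < s.length →
        |dist (v (s.getD p 0)) (v (s.getD q 0)) -
          dist (DD u (Nat.unpair p).1 A) (DD u (Nat.unpair q).1 A)| ≤
          (1/2 : ℝ) ^ (Nat.unpair p).2 + (1/2 : ℝ) ^ (Nat.unpair q).2})

lemma scheme_meas [SeparableSpace E] [MeasurableSpace E] [BorelSpace E]
    (u : ℕ → E) (hu : DenseRange u) (v : ℕ → M) (s : List ℕ) :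
    MeasurableSet[effrosSigma E] (scheme u v s) := by
  haveI : SecondCountableTopology E := UniformSpace.secondCountable_of_separable E
  refine @MeasurableSet.union _ (effrosSigma E) _ _ empty_meas ?_
  refine @MeasurableSet.inter _ (effrosSigma E) _ _ nonempty_meas ?_
  refine MeasurableSet.iInter fun p => MeasurableSet.iInter fun q => ?_
  by_cases hp : p < s.length
  · by_cases hq : q < s.length
    · have hd : @Measurable _ _ (effrosSigma E) _
          (fun A : FF E => |dist (v (s.getD p 0)) (v (s.getD q 0)) -
            dist (DD u (Nat.unpair p).1 A) (DD u (Nat.unpair q).1 A)|) := by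
        have hpair : @Measurable _ _ (effrosSigma E) _
            (fun A : FF E => (DD u (Nat.unpair p).1 A, DD u (Nat.unpair q).1 A)) :=
          (DD_meas u hu (Nat.unpair p).1).prodMk (DD_meas u hu (Nat.unpair q).1)
        have h1 : @Measurable _ _ (effrosSigma E) _
            (fun A : FF E => dist (DD u (Nat.unpair p).1 A) (DD u (Nat.unpair q).1 A)) :=
          continuous_dist.measurable.comp hpair
        exact ((continuous_const.sub continuous_id).abs.measurable).comp h1
      have hset : {A : FF E | p < s.length → q < s.length →
          |dist (v (s.getD p 0)) (v (s.getD q 0)) -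
            dist (DD u (Nat.unpair p).1 A) (DD u (Nat.unpair q).1 A)| ≤
            (1/2 : ℝ) ^ (Nat.unpair p).2 + (1/2 : ℝ) ^ (Nat.unpair q).2} =
          (fun A : FF E => |dist (v (s.getD p 0)) (v (s.getD q 0)) -
            dist (DD u (Nat.unpair p).1 A) (DD u (Nat.unpair q).1 A)|) ⁻¹'
            (Iic ((1/2 : ℝ) ^ (Nat.unpair p).2 + (1/2 : ℝ) ^ (Nat.unpair q).2)) := by
        ext A
        simp [hp, hq]
      rw [hset]
      exact hd measurableSet_Iic
    · have hset : {A : FF E | p < s.length → q < s.length →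
          |dist (v (s.getD p 0)) (v (s.getD q 0)) -
            dist (DD u (Nat.unpair p).1 A) (DD u (Nat.unpair q).1 A)| ≤
            (1/2 : ℝ) ^ (Nat.unpair p).2 + (1/2 : ℝ) ^ (Nat.unpair q).2} = univ := by
        ext A; simp [hq]
      rw [hset]
      exact @MeasurableSet.univ _ (effrosSigma E)
  · have hset : {A : FF E | p < s.length → q < s.length →
        |dist (v (s.getD p 0)) (v (s.getD q 0)) -
          dist (DD u (Nat.unpair p).1 A) (DD u (Nat.unpair q).1 A)| ≤
          (1/2 : ℝ) ^ (Nat.unpair p).2 + (1/2 : ℝ) ^ (Nat.unpair q).2} = univ := by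
      ext A; simp [hp]
    rw [hset]
    exact @MeasurableSet.univ _ (effrosSigma E)

lemma scheme_eq (u : ℕ → E) (v : ℕ → M) (hv : DenseRange v) :
    (⋃ σ : ℕ → ℕ, ⋂ n : ℕ, scheme u v (List.ofFn fun i : Fin n => σ i)) =
    {A : FF E | (A : Set E) = ∅} ∪
    {A : FF E | (A : Set E).Nonempty ∧ ∃ y : ℕ → M,
      ∀ i j, dist (y i) (y j) = dist (DD u i A) (DD u j A)} := by
  apply Subset.antisymm
  · intro A hA
    obtain ⟨σ, hA⟩ := mem_iUnion.1 hA
    have hAn := fun n => mem_iInter.1 hA n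
    rcases eq_empty_or_nonempty (A : Set E) with he | hne
    · exact Or.inl he
    · refine Or.inr ⟨hne, ?_⟩
      have hcond : ∀ p q : ℕ,
          |dist (v (σ p)) (v (σ q)) -
            dist (DD u (Nat.unpair p).1 A) (DD u (Nat.unpair q).1 A)| ≤
            (1/2 : ℝ) ^ (Nat.unpair p).2 + (1/2 : ℝ) ^ (Nat.unpair q).2 := by
        intro p q
        rcases hAn (max p q + 1) with h | ⟨-, h⟩
        · exact absurd h hne.ne_empty
        · have hlen : (List.ofFn fun i : Fin (max p q + 1) => σ i).length = max p q + 1 := by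
            simp
          have hp : p < (List.ofFn fun i : Fin (max p q + 1) => σ i).length := by
            rw [hlen]; exact Nat.lt_succ_of_le (le_max_left p q)
          have hq : q < (List.ofFn fun i : Fin (max p q + 1) => σ i).length := by
            rw [hlen]; exact Nat.lt_succ_of_le (le_max_right p q)
          have hc := (mem_iInter.1 (mem_iInter.1 h p) q) hp hq
          have e1 : (List.ofFn fun i : Fin (max p q + 1) => σ i).getD p 0 = σ p := by
            rw [List.getD_eq_getElem _ _ hp, List.getElem_ofFn]
          have e2 : (List.ofFn fun i : Fin (max p q + 1) => σ i).getD q 0 = σ q := by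
            rw [List.getD_eq_getElem _ _ hq, List.getElem_ofFn]
          rwa [e1, e2] at hc
      have hyex : ∀ i : ℕ, ∃ z : M,
          Filter.Tendsto (fun m => v (σ (Nat.pair i m))) Filter.atTop (nhds z) := by
        intro i
        refine cauchySeq_tendsto_of_complete (cauchy_of_pow _ fun m l => ?_)
        have h := hcond (Nat.pair i m) (Nat.pair i l)
        rw [Nat.unpair_pair, Nat.unpair_pair] at h
        simp only [dist_self, sub_zero] at h
        calc dist (v (σ (Nat.pair i m))) (v (σ (Nat.pair i l)))
            ≤ |dist (v (σ (Nat.pair i m))) (v (σ (Nat.pair i l)))| := le_abs_self _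
          _ ≤ _ := h
      choose y hy using hyex
      refine ⟨y, fun i j => ?_⟩
      have h1 : Filter.Tendsto (fun m => dist (v (σ (Nat.pair i m))) (v (σ (Nat.pair j m))))
          Filter.atTop (nhds (dist (y i) (y j))) := (hy i).dist (hy j)
      have h2 : Filter.Tendsto (fun m => dist (v (σ (Nat.pair i m))) (v (σ (Nat.pair j m))))
          Filter.atTop (nhds (dist (DD u i A) (DD u j A))) := by
        rw [tendsto_iff_dist_tendsto_zero]
        refine squeeze_zero (g := fun m => (1/2 : ℝ) ^ m + (1/2 : ℝ) ^ m)
          (fun m => dist_nonneg) (fun m => ?_) ?_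
        · have h := hcond (Nat.pair i m) (Nat.pair j m)
          rw [Nat.unpair_pair, Nat.unpair_pair] at h
          rw [Real.dist_eq]
          exact h
        · have hpow := tendsto_pow_atTop_nhds_zero_of_lt_one
            (by norm_num : (0:ℝ) ≤ 1/2) (by norm_num : (1/2:ℝ) < 1)
          simpa using hpow.add hpow
      exact tendsto_nhds_unique h1 h2
  · rintro A (hA | ⟨hne, y, hy⟩)
    · exact mem_iUnion.2 ⟨fun _ => 0, mem_iInter.2 fun n => Or.inl hA⟩
    · have hσex : ∀ p : ℕ, ∃ k,
          dist (y (Nat.unpair p).1) (v k) < (1/2 : ℝ) ^ (Nat.unpair p).2 :=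
        fun p => Metric.denseRange_iff.1 hv _ _ (by positivity)
      choose σ hσ using hσex
      refine mem_iUnion.2 ⟨σ, mem_iInter.2 fun n => Or.inr ⟨hne, ?_⟩⟩
      refine mem_iInter.2 fun p => mem_iInter.2 fun q => ?_
      intro hp hq
      have e1 : (List.ofFn fun i : Fin n => σ i).getD p 0 = σ p := by
        rw [List.getD_eq_getElem _ _ hp, List.getElem_ofFn]
      have e2 : (List.ofFn fun i : Fin n => σ i).getD q 0 = σ q := by
        rw [List.getD_eq_getElem _ _ hq, List.getElem_ofFn]
      show |dist (v ((List.ofFn fun i : Fin n => σ i).getD p 0))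
          (v ((List.ofFn fun i : Fin n => σ i).getD q 0)) -
          dist (DD u (Nat.unpair p).1 A) (DD u (Nat.unpair q).1 A)| ≤
          (1/2 : ℝ) ^ (Nat.unpair p).2 + (1/2 : ℝ) ^ (Nat.unpair q).2
      rw [e1, e2, ← hy (Nat.unpair p).1 (Nat.unpair q).1]
      calc |dist (v (σ p)) (v (σ q)) - dist (y (Nat.unpair p).1) (y (Nat.unpair q).1)|
          = dist (dist (v (σ p)) (v (σ q))) (dist (y (Nat.unpair p).1) (y (Nat.unpair q).1)) :=
            (Real.dist_eq _ _).symm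
        _ ≤ dist (v (σ p)) (y (Nat.unpair p).1) + dist (v (σ q)) (y (Nat.unpair q).1) :=
            dist_dist_dist_le _ _ _ _
        _ ≤ (1/2 : ℝ) ^ (Nat.unpair p).2 + (1/2 : ℝ) ^ (Nat.unpair q).2 := by
            have h1 := hσ p
            have h2 := hσ q
            rw [dist_comm] at h1 h2
            exact add_le_add h1.le h2.le

end Main
end Stmt11

theorem isomGraphs_measurable_proj_measurable_image_souslin
    (E M : Type) [MetricSpace E] [CompleteSpace E] [SeparableSpace E]
    [MetricSpace M] [CompleteSpace M] [SeparableSpace M] :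
    MeasurableSet[effrosSigma (E × M)] (isomGraphs E M) ∧
    (∀ T ∈ isomGraphs E M, IsClosed (Prod.fst '' (T : Set (E × M)))) ∧
    @Measurable _ _ ((effrosSigma (E × M)).comap
        (Subtype.val : (isomGraphs E M) → {A : Set (E × M) // IsClosed A}))
      (effrosSigma E)
      (fun T : isomGraphs E M => projE E M (T : {A : Set (E × M) // IsClosed A})) ∧
    IsSouslinIn (effrosSigma E) (projE E M '' isomGraphs E M) := by
  refine ⟨Stmt11.isomGraphs_meas, fun T hT => Stmt11.proj_closed _ T.2 hT, ?_, ?_⟩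
  · -- Part 3
    have hval : @Measurable _ _ ((effrosSigma (E × M)).comap
        (Subtype.val : (isomGraphs E M) → {A : Set (E × M) // IsClosed A}))
        (effrosSigma (E × M))
        (Subtype.val : (isomGraphs E M) → {A : Set (E × M) // IsClosed A}) :=
      fun s hs => ⟨s, hs, rfl⟩
    exact (Stmt11.projE_meas).comp hval
  · -- Part 4
    by_cases hEM : Nonempty E ∧ Nonempty M
    · obtain ⟨hE, hM⟩ := hEM
      obtain ⟨u, hu⟩ := TopologicalSpace.exists_dense_seq E
      obtain ⟨v, hv⟩ := TopologicalSpace.exists_dense_seq M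
      letI : MeasurableSpace E := borel E
      haveI : BorelSpace E := ⟨rfl⟩
      refine ⟨Stmt11.scheme u v, fun s => Stmt11.scheme_meas u hu v s, ?_⟩
      rw [Stmt11.image_eq u hu, Stmt11.scheme_eq u v hv]
    · have hempty : IsEmpty (E × M) := by
        rcases not_and_or.1 hEM with h | h
        · exact ⟨fun p => (not_nonempty_iff.1 h).false p.1⟩
        · exact ⟨fun p => (not_nonempty_iff.1 h).false p.2⟩
      have himg : projE E M '' isomGraphs E M =
          {A : Stmt11.FF E | (A : Set E) = ∅} := by
        ext A
        constructor
        · rintro ⟨T, -, rfl⟩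
          have hT : (T : Set (E × M)) = ∅ := Set.eq_empty_of_isEmpty _
          show closure (Prod.fst '' (T : Set (E × M))) = ∅
          rw [hT, image_empty, closure_empty]
        · intro hA
          refine ⟨⟨∅, isClosed_empty⟩, fun p hp => absurd hp (notMem_empty p), ?_⟩
          apply Subtype.ext
          show closure (Prod.fst '' (∅ : Set (E × M))) = (A : Set E)
          rw [image_empty, closure_empty, hA]
      haveI : SecondCountableTopology E := UniformSpace.secondCountable_of_separable E
      refine ⟨fun _ => {A : Stmt11.FF E | (A : Set E) = ∅},
        fun s => Stmt11.empty_meas, ?_⟩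
      rw [himg]
      ext A
      simp only [mem_iUnion, mem_iInter]
      exact ⟨fun h => ⟨fun _ => 0, fun _ => h⟩, fun ⟨σ, h⟩ => h 0⟩
end
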